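/- arXiv:2106.01774 — 3 statements merged into one kernel-verified Lean document; each statement's English description precedes it below -/
import Mathlib

section
/- Let G be a finite simple chordal graph with a rooted list R(G) = u_1,…,u_q. Then (1) {u_1,…,u_q} equals the minimal monomial generating set G(J(G)) of the cover ideal J(G), and (2) J(G) has linear quotients with respect to the order u_1,…,u_q, i.e., for every i = 2,…,q the colon ideal (u_1,…,u_{i−1}) : (u_i) is generated by a subset of the variables. -/
open MvPolynomial

noncomputable section

/-- The cover ideal of the path graph `P_n` on vertices `x_1, …, x_n`:
the intersection of the ideals `(x_i, x_{i+1})` over the edges of the path. -/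
def pathCoverIdeal (k : Type*) [Field k] (n : ℕ) : Ideal (MvPolynomial ℕ k) :=
  ⨅ i ∈ Finset.Icc 1 (n - 1), Ideal.span {(X i : MvPolynomial ℕ k), X (i + 1)}

/-- A monomial with coefficient `1`. -/
def IsMonomial {k : Type*} [Field k] (m : MvPolynomial ℕ k) : Prop :=
  ∃ a : ℕ →₀ ℕ, m = monomial a 1

/-- The minimal monomial generating set `G(I)` of a monomial ideal `I`:
monomials of `I` that are not strictly divisible by another monomial of `I`. -/
def minGens {k : Type*} [Field k] (I : Ideal (MvPolynomial ℕ k)) :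
    Set (MvPolynomial ℕ k) :=
  {m | IsMonomial m ∧ m ∈ I ∧ ∀ m', IsMonomial m' → m' ∈ I → m' ∣ m → m' = m}

/-- The rooted list `R(P_n)` of the path `P_n`. -/
def rootedList (k : Type*) [Field k] : ℕ → List (MvPolynomial ℕ k)
  | 0 => [1]
  | 1 => [1]
  | 2 => [X 1, X 2]
  | 3 => [X 2, X 1 * X 3]
  | (n + 4) =>
      ((rootedList k (n + 2)).map fun u => X (n + 3) * u) ++
      ((rootedList k (n + 1)).map fun u => X (n + 4) * X (n + 2) * u)

/-- `F(I^s)`: the set of `s`-fold products of minimal generators of `I`. -/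
def sFold {k : Type*} [Field k] (I : Ideal (MvPolynomial ℕ k)) (s : ℕ) :
    Set (MvPolynomial ℕ k) :=
  {m | ∃ L : List (MvPolynomial ℕ k), L.length = s ∧ (∀ u ∈ L, u ∈ minGens I) ∧ m = L.prod}

/-- `a >_lex b`: the first entry where `a` and `b` differ is bigger in `a`. -/
def lexGt (a b : ℕ → ℕ) : Prop :=
  ∃ t, (∀ j, j < t → a j = b j) ∧ b t < a t

/-- `a` is an exponent-vector expression of `M` as an `s`-fold product of the terms of
the list `L`. -/
def IsExprOn {k : Type*} [Field k] (L : List (MvPolynomial ℕ k)) (s : ℕ) (a : ℕ → ℕ)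
    (M : MvPolynomial ℕ k) : Prop :=
  (∀ i, L.length ≤ i → a i = 0) ∧ (∑ i ∈ Finset.range L.length, a i) = s ∧
    M = ∏ i ∈ Finset.range L.length, (L.getD i 1) ^ (a i)

/-- `a` is the (lexicographically) maximal expression of `M` as an `s`-fold product of
the terms of the list `L`. -/
def IsMaxExpr {k : Type*} [Field k] (L : List (MvPolynomial ℕ k)) (s : ℕ) (a : ℕ → ℕ)
    (M : MvPolynomial ℕ k) : Prop :=
  IsExprOn L s a M ∧ ∀ b, IsExprOn L s b M → b ≠ a → lexGt a b

/-- The rooted order `M >_R N` on `s`-fold products, relative to the list `L` of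
minimal generators: maximal expressions are compared lexicographically. -/
def rootedGt {k : Type*} [Field k] (L : List (MvPolynomial ℕ k)) (s : ℕ)
    (M N : MvPolynomial ℕ k) : Prop :=
  ∃ a b, IsMaxExpr L s a M ∧ IsMaxExpr L s b N ∧ lexGt a b

/-- An ideal is generated by a subset of the variables. -/
def genByVars {k : Type*} [Field k] (I : Ideal (MvPolynomial ℕ k)) : Prop :=
  ∃ T : Set ℕ, I = Ideal.span ((fun i => (X i : MvPolynomial ℕ k)) '' T)

end

/-- A finite simple graph on a finite set of vertices drawn from `ℕ`
(vertices are identified with the variables `x_i` of the polynomial ring). -/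
structure FinGraph where
  verts : Finset ℕ
  adj : ℕ → ℕ → Bool
  symm : ∀ a b, adj a b = adj b a
  loopless : ∀ a, adj a a = false
  mem_of_adj : ∀ a b, adj a b = true → a ∈ verts ∧ b ∈ verts

/-- The (open) neighbourhood `N(v)` of a vertex. -/
def FinGraph.nbr (G : FinGraph) (v : ℕ) : Finset ℕ :=
  G.verts.filter fun w => G.adj v w

/-- The graph `G \ A` obtained by deleting a set `A` of vertices. -/
def FinGraph.del (G : FinGraph) (A : Finset ℕ) : FinGraph where
  verts := G.verts \ A
  adj a b := G.adj a b && !(decide (a ∈ A) || decide (b ∈ A))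
  symm a b := by (try simp only []); rw [G.symm a b, Bool.or_comm]
  loopless a := by simp [G.loopless a]
  mem_of_adj a b h := by
    simp only [Bool.and_eq_true, Bool.not_eq_true', Bool.or_eq_false_iff,
      decide_eq_false_iff_not] at h
    exact ⟨Finset.mem_sdiff.2 ⟨(G.mem_of_adj a b h.1).1, h.2.1⟩,
      Finset.mem_sdiff.2 ⟨(G.mem_of_adj a b h.1).2, h.2.2⟩⟩

/-- A graph is chordal if it has no induced cycle of length greater than `3`. -/
def FinGraph.Chordal (G : FinGraph) : Prop :=
  ¬ ∃ (m : ℕ) (f : ℕ → ℕ), 4 ≤ m ∧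
    (∀ i j, i < m → j < m → f i = f j → i = j) ∧
    (∀ i, i < m → G.adj (f i) (f ((i + 1) % m)) = true) ∧
    (∀ i j, i < m → j < m → G.adj (f i) (f j) = true →
      j = (i + 1) % m ∨ i = (j + 1) % m)

/-- A simplicial vertex: its neighbourhood induces a complete graph. -/
def FinGraph.Simplicial (G : FinGraph) (v : ℕ) : Prop :=
  v ∈ G.verts ∧ ∀ a ∈ G.nbr v, ∀ b ∈ G.nbr v, a ≠ b → G.adj a b = true

/-- The cover ideal `J(G)` of a graph, i.e. the intersection of the ideals
`(x_a, x_b)` over all edges `{x_a, x_b}` of `G`. -/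
noncomputable def coverIdeal (k : Type*) [Field k] (G : FinGraph) : Ideal (MvPolynomial ℕ k) :=
  ⨅ (a : ℕ) (b : ℕ) (_ : G.adj a b = true), Ideal.span {(X a : MvPolynomial ℕ k), X b}

/-- `IsRootedList k G L`: `L` is a rooted list of the (chordal) graph `G`.  If `G` has
no edges then `L = [1]`; otherwise, for some simplicial vertex `v` whose closed
neighbourhood `N[v]` is enumerated as `l = v, x_2, …, x_m`, `L` is the concatenation of
the lists `R(G \ N[x_i]) · N(x_i)` for `x_i` running along `l`. -/
inductive IsRootedList (k : Type*) [Field k] : FinGraph → List (MvPolynomial ℕ k) → Prop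
  | edgeless (G : FinGraph) (h : ∀ a b, G.adj a b = false) :
      IsRootedList k G [1]
  | step (G : FinGraph) (v : ℕ)
      (hsimp : G.Simplicial v) (hedge : ∃ w, G.adj v w = true)
      (l : List ℕ) (hnd : l.Nodup) (hhd : l.head? = some v)
      (hset : l.toFinset = insert v (G.nbr v))
      (Ls : List (List (MvPolynomial ℕ k))) (hlen : Ls.length = l.length)
      (hrec : ∀ i, i < l.length →
        IsRootedList k (G.del (insert (l.getD i 0) (G.nbr (l.getD i 0)))) (Ls.getD i []))
      : IsRootedList k G
          ((List.range l.length).flatMap fun i =>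
            (Ls.getD i []).map fun u => (∏ j ∈ G.nbr (l.getD i 0), X j) * u)

namespace CRL

open MvPolynomial Finset

/-! ### Vertex covers -/

/-- `C` is a vertex cover of `G`. -/
def IsCover (G : FinGraph) (C : Finset ℕ) : Prop :=
  ∀ a b, G.adj a b = true → a ∈ C ∨ b ∈ C

/-- `C` is a minimal vertex cover of `G`. -/
def MinCover (G : FinGraph) (C : Finset ℕ) : Prop :=
  IsCover G C ∧ ∀ D ⊆ C, IsCover G D → D = C

lemma exists_minCover_subset {G : FinGraph} :
    ∀ (C : Finset ℕ), IsCover G C → ∃ D ⊆ C, MinCover G D := by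
  intro C
  induction C using Finset.strongInduction with
  | _ C ih =>
    intro hC
    by_cases h : ∀ D ⊆ C, IsCover G D → D = C
    · exact ⟨C, subset_rfl, hC, h⟩
    · push_neg at h
      obtain ⟨D, hDC, hD, hne⟩ := h
      obtain ⟨E, hED, hE⟩ := ih D (Finset.ssubset_iff_subset_ne.2 ⟨hDC, hne⟩) hD
      exact ⟨E, hED.trans hDC, hE⟩

lemma MinCover.subset_verts {G : FinGraph} {C} (h : MinCover G C) : C ⊆ G.verts := by
  have hcov : IsCover G (C ∩ G.verts) := fun a b hab => by
    rcases h.1 a b hab with h1 | h1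
    · exact Or.inl (Finset.mem_inter.2 ⟨h1, (G.mem_of_adj a b hab).1⟩)
    · exact Or.inr (Finset.mem_inter.2 ⟨h1, (G.mem_of_adj a b hab).2⟩)
  have := h.2 (C ∩ G.verts) Finset.inter_subset_left hcov
  intro x hx; rw [← this] at hx; exact (Finset.mem_inter.1 hx).2

/-! ### Monomials attached to finsets -/

variable {k : Type*} [Field k]

/-- The indicator finsupp of a finset. -/
noncomputable def ind (C : Finset ℕ) : ℕ →₀ ℕ := ∑ x ∈ C, Finsupp.single x 1

lemma ind_apply (C : Finset ℕ) (y : ℕ) : ind C y = if y ∈ C then 1 else 0 := by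
  classical
  rw [ind, Finsupp.finset_sum_apply]
  rw [show (∑ x ∈ C, (Finsupp.single x 1) y) = ∑ x ∈ C, if x = y then 1 else 0 from
    Finset.sum_congr rfl fun x _ => Finsupp.single_apply]
  rw [Finset.sum_ite_eq' C y (fun _ => 1)]

lemma ind_apply_of_mem {C : Finset ℕ} {y : ℕ} (h : y ∈ C) : ind C y = 1 := by
  rw [ind_apply, if_pos h]

lemma ind_apply_of_not_mem {C : Finset ℕ} {y : ℕ} (h : y ∉ C) : ind C y = 0 := by
  rw [ind_apply, if_neg h]

/-- The squarefree monomial attached to a finset of variables. -/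
noncomputable def prodX (k : Type*) [Field k] (C : Finset ℕ) : MvPolynomial ℕ k :=
  ∏ x ∈ C, X x

lemma ind_insert {a : ℕ} {C : Finset ℕ} (hx : a ∉ C) :
    ind (insert a C) = Finsupp.single a 1 + ind C := by
  simp [ind, Finset.sum_insert hx]

lemma prodX_eq (C : Finset ℕ) : prodX k C = monomial (ind C) (1 : k) := by
  classical
  induction C using Finset.induction with
  | empty => simp [prodX, ind]
  | @insert a C hx ih =>
    rw [prodX, Finset.prod_insert hx, ← prodX, ih, ind_insert hx,
      show (X a : MvPolynomial ℕ k) = monomial (Finsupp.single a 1) 1 from rfl,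
      monomial_mul, one_mul]

/-! ### Membership in the cover ideal -/

lemma pair_span_eq (a b : ℕ) : (Ideal.span {(X a : MvPolynomial ℕ k), X b}) =
    Ideal.span ((fun s => monomial s (1 : k)) ''
      {Finsupp.single a 1, Finsupp.single b 1}) := by
  congr 1
  rw [Set.image_pair]
  rfl

lemma monomial_mem_pair {e : ℕ →₀ ℕ} (a b : ℕ) :
    (monomial e (1 : k)) ∈ Ideal.span {(X a : MvPolynomial ℕ k), X b} ↔
      1 ≤ e a ∨ 1 ≤ e b := by
  rw [pair_span_eq, mem_ideal_span_monomial_image]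
  simp [support_monomial, Finsupp.single_le_iff]

lemma monomial_mem_coverIdeal {G : FinGraph} {e : ℕ →₀ ℕ} :
    (monomial e (1 : k)) ∈ coverIdeal k G ↔
      ∀ a b, G.adj a b = true → 1 ≤ e a ∨ 1 ≤ e b := by
  simp only [coverIdeal, Submodule.mem_iInf]
  exact forall_congr' fun a => forall_congr' fun b => forall_congr' fun h =>
    monomial_mem_pair a b

lemma support_isCover {G : FinGraph} {e : ℕ →₀ ℕ}
    (h : (monomial e (1 : k)) ∈ coverIdeal k G) : IsCover G e.support := by
  intro a b hab
  rcases monomial_mem_coverIdeal.1 h a b hab with h1 | h1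
  · exact Or.inl (Finsupp.mem_support_iff.2 (by omega))
  · exact Or.inr (Finsupp.mem_support_iff.2 (by omega))

lemma prodX_mem_coverIdeal {G : FinGraph} {C : Finset ℕ} (h : IsCover G C) :
    prodX k C ∈ coverIdeal k G := by
  rw [prodX_eq, monomial_mem_coverIdeal]
  intro a b hab
  rcases h a b hab with h1 | h1
  · exact Or.inl (by rw [ind_apply_of_mem h1])
  · exact Or.inr (by rw [ind_apply_of_mem h1])

lemma minGens_coverIdeal (G : FinGraph) :
    minGens (coverIdeal k G) = prodX k '' {C | MinCover G C} := by
  ext m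
  constructor
  · rintro ⟨⟨e, rfl⟩, hmem, hmin⟩
    obtain ⟨C, hCe, hC⟩ := exists_minCover_subset e.support (support_isCover hmem)
    have hle : ind C ≤ e := by
      intro y
      rw [ind_apply]
      split
      · exact Nat.one_le_iff_ne_zero.2 (Finsupp.mem_support_iff.1 (hCe (by assumption)))
      · exact Nat.zero_le _
    have hdvd : prodX k C ∣ monomial e 1 := by
      rw [prodX_eq]
      exact monomial_dvd_monomial.2 ⟨Or.inr hle, dvd_refl _⟩
    have := hmin (prodX k C) ⟨ind C, prodX_eq C⟩ (prodX_mem_coverIdeal hC.1) hdvd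
    exact ⟨C, hC, this⟩
  · rintro ⟨C, hC, rfl⟩
    refine ⟨⟨ind C, prodX_eq C⟩, prodX_mem_coverIdeal hC.1, ?_⟩
    rintro _ ⟨e', rfl⟩ hmem' hdvd
    rw [prodX_eq] at hdvd ⊢
    have hle : e' ≤ ind C := by
      rcases (monomial_dvd_monomial.1 hdvd).1 with h1 | h1
      · exact absurd h1 one_ne_zero
      · exact h1
    have hsub : e'.support ⊆ C := by
      intro x hx
      have h1 := Nat.one_le_iff_ne_zero.2 (Finsupp.mem_support_iff.1 hx)
      have h2 := hle x
      rw [ind_apply] at h2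
      by_contra hxc
      rw [if_neg hxc] at h2
      omega
    have hsupeq : e'.support = C := hC.2 e'.support hsub (support_isCover hmem')
    have : e' = ind C := by
      ext y
      rw [ind_apply]
      split
      · rename_i hy
        have h1 : 1 ≤ e' y := Nat.one_le_iff_ne_zero.2
          (Finsupp.mem_support_iff.1 (hsupeq ▸ hy))
        have h2 := hle y
        rw [ind_apply_of_mem ‹y ∈ C›] at h2
        omega
      · rename_i hy
        have : y ∉ e'.support := fun hc => hy (hsupeq ▸ hc)
        exact Finsupp.notMem_support_iff.1 this
    rw [this]

/-! ### Graph lemmas -/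

lemma mem_nbr {G : FinGraph} {v w : ℕ} : w ∈ G.nbr v ↔ G.adj v w = true := by
  constructor
  · intro h; exact (Finset.mem_filter.1 h).2
  · intro h; exact Finset.mem_filter.2 ⟨(G.mem_of_adj v w h).2, h⟩

lemma del_adj {G : FinGraph} {A : Finset ℕ} {a b : ℕ} :
    (G.del A).adj a b = true ↔ G.adj a b = true ∧ a ∉ A ∧ b ∉ A := by
  simp [FinGraph.del]

lemma del_verts (G : FinGraph) (A : Finset ℕ) : (G.del A).verts = G.verts \ A := rfl

lemma not_mem_nbr_self (G : FinGraph) (v : ℕ) : v ∉ G.nbr v := by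
  rw [mem_nbr, G.loopless v]; exact Bool.false_ne_true

/-- in a simplicial closed neighbourhood, distinct vertices are adjacent -/
lemma clique_adj {G : FinGraph} {v : ℕ} (hs : G.Simplicial v) {a b : ℕ}
    (ha : a ∈ insert v (G.nbr v)) (hb : b ∈ insert v (G.nbr v)) (hab : a ≠ b) :
    G.adj a b = true := by
  rcases Finset.mem_insert.1 ha with rfl | ha'
  · rcases Finset.mem_insert.1 hb with rfl | hb'
    · exact absurd rfl hab
    · exact mem_nbr.1 hb'
  · rcases Finset.mem_insert.1 hb with rfl | hb'
    · rw [G.symm]; exact mem_nbr.1 ha'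
    · exact hs.2 a ha' b hb' hab

/-- union of a neighbourhood and a cover of the deleted graph is a cover -/
lemma isCover_union {G : FinGraph} (w : ℕ) {D : Finset ℕ}
    (hD : IsCover (G.del (insert w (G.nbr w))) D) : IsCover G (G.nbr w ∪ D) := by
  intro a b hab
  by_cases haw : a ∈ G.nbr w
  · exact Or.inl (Finset.mem_union_left _ haw)
  by_cases hbw : b ∈ G.nbr w
  · exact Or.inr (Finset.mem_union_left _ hbw)
  have haw' : a ≠ w := by
    rintro rfl
    exact hbw (mem_nbr.2 hab)
  have hbw' : b ≠ w := by
    rintro rfl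
    exact haw (mem_nbr.2 (by rw [G.symm]; exact hab))
  have : (G.del (insert w (G.nbr w))).adj a b = true := by
    rw [del_adj]
    exact ⟨hab, by simp [haw, haw'], by simp [hbw, hbw']⟩
  rcases hD a b this with h1 | h1
  · exact Or.inl (Finset.mem_union_right _ h1)
  · exact Or.inr (Finset.mem_union_right _ h1)

lemma minCover_disj {G : FinGraph} {w : ℕ} {D : Finset ℕ}
    (hD : MinCover (G.del (insert w (G.nbr w))) D) :
    (∀ x ∈ D, x ∉ insert w (G.nbr w)) := by
  intro x hx hmem
  have := hD.subset_verts hx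
  rw [del_verts, Finset.mem_sdiff] at this
  exact this.2 hmem

lemma minCover_union {G : FinGraph} {w : ℕ} {D : Finset ℕ}
    (hD : MinCover (G.del (insert w (G.nbr w))) D) : MinCover G (G.nbr w ∪ D) := by
  have hwD : w ∉ D := fun hc => minCover_disj hD w hc (Finset.mem_insert_self _ _)
  refine ⟨isCover_union w hD.1, ?_⟩
  intro E hE hEcov
  have hwE : w ∉ E := fun hc => by
    rcases Finset.mem_union.1 (hE hc) with h1 | h1
    · exact not_mem_nbr_self G w h1
    · exact hwD h1
  have hnbr : G.nbr w ⊆ E := by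
    intro u hu
    rcases hEcov w u (mem_nbr.1 hu) with h1 | h1
    · exact absurd h1 hwE
    · exact h1
  have hD'cov : IsCover (G.del (insert w (G.nbr w))) (E \ G.nbr w) := by
    intro a b hab
    rw [del_adj] at hab
    rcases hEcov a b hab.1 with h1 | h1
    · exact Or.inl (Finset.mem_sdiff.2 ⟨h1, fun hc =>
        hab.2.1 (Finset.mem_insert_of_mem hc)⟩)
    · exact Or.inr (Finset.mem_sdiff.2 ⟨h1, fun hc =>
        hab.2.2 (Finset.mem_insert_of_mem hc)⟩)
  have hD'sub : E \ G.nbr w ⊆ D := by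
    intro x hx
    rw [Finset.mem_sdiff] at hx
    rcases Finset.mem_union.1 (hE hx.1) with h1 | h1
    · exact absurd h1 hx.2
    · exact h1
  have hD'eq : E \ G.nbr w = D := hD.2 _ hD'sub hD'cov
  apply Finset.Subset.antisymm hE
  intro x hx
  rcases Finset.mem_union.1 hx with h1 | h1
  · exact hnbr h1
  · rw [← hD'eq] at h1
    exact (Finset.mem_sdiff.1 h1).1

/-- decomposition of a minimal cover relative to a simplicial vertex -/
lemma minCover_decompose {G : FinGraph} {v : ℕ} (hs : G.Simplicial v) {C : Finset ℕ}
    (hC : MinCover G C) :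
    ∃ w ∈ insert v (G.nbr v), w ∉ C ∧ G.nbr w ⊆ C ∧
      MinCover (G.del (insert w (G.nbr w))) (C \ G.nbr w) ∧ C = G.nbr w ∪ (C \ G.nbr w) := by
  classical
  -- find the missing clique vertex
  have hmiss : ∃ w ∈ insert v (G.nbr v), w ∉ C := by
    by_contra hc
    push_neg at hc
    have hvC : v ∈ C := hc v (Finset.mem_insert_self _ _)
    have herase : IsCover G (C.erase v) := by
      intro a b hab
      by_cases hav : a = v
      · subst hav
        have hb : b ∈ G.nbr a := mem_nbr.2 hab
        have hbne : b ≠ a := by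
          rintro rfl
          exact not_mem_nbr_self G b hb
        exact Or.inr (Finset.mem_erase.2 ⟨hbne, hc b (Finset.mem_insert_of_mem hb)⟩)
      by_cases hbv : b = v
      · subst hbv
        have ha : a ∈ G.nbr b := mem_nbr.2 (by rw [G.symm]; exact hab)
        exact Or.inl (Finset.mem_erase.2 ⟨hav, hc a (Finset.mem_insert_of_mem ha)⟩)
      · rcases hC.1 a b hab with h1 | h1
        · exact Or.inl (Finset.mem_erase.2 ⟨hav, h1⟩)
        · exact Or.inr (Finset.mem_erase.2 ⟨hbv, h1⟩)
    have heq := hC.2 (C.erase v) (Finset.erase_subset _ _) herase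
    rw [← heq] at hvC
    exact (Finset.notMem_erase v C) hvC
  obtain ⟨w, hwmem, hwC⟩ := hmiss
  have hnbr : G.nbr w ⊆ C := by
    intro u hu
    rcases hC.1 w u (mem_nbr.1 hu) with h1 | h1
    · exact absurd h1 hwC
    · exact h1
  have hDcov : IsCover (G.del (insert w (G.nbr w))) (C \ G.nbr w) := by
    intro a b hab
    rw [del_adj] at hab
    rcases hC.1 a b hab.1 with h1 | h1
    · exact Or.inl (Finset.mem_sdiff.2 ⟨h1, fun hc =>
        hab.2.1 (Finset.mem_insert_of_mem hc)⟩)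
    · exact Or.inr (Finset.mem_sdiff.2 ⟨h1, fun hc =>
        hab.2.2 (Finset.mem_insert_of_mem hc)⟩)
  have hCeq : C = G.nbr w ∪ (C \ G.nbr w) := by
    rw [Finset.union_sdiff_of_subset hnbr]
  refine ⟨w, hwmem, hwC, hnbr, ⟨hDcov, ?_⟩, hCeq⟩
  intro D' hD' hD'cov
  have hcov' : IsCover G (G.nbr w ∪ D') := isCover_union w hD'cov
  have hsub' : G.nbr w ∪ D' ⊆ C := by
    intro x hx
    rcases Finset.mem_union.1 hx with h1 | h1
    · exact hnbr h1
    · exact (Finset.mem_sdiff.1 (hD' h1)).1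
  have hCeq' := hC.2 _ hsub' hcov'
  apply Finset.Subset.antisymm hD'
  intro x hx
  rw [Finset.mem_sdiff] at hx
  rw [← hCeq'] at hx
  rcases Finset.mem_union.1 hx.1 with h1 | h1
  · exact absurd h1 hx.2
  · exact h1

/-! ### Linear quotients, combinatorially -/

/-- the linear-quotient property of a list of covers -/
def LQ (Cs : List (Finset ℕ)) : Prop :=
  ∀ pre (C : Finset ℕ) suf, Cs = pre ++ C :: suf → ∀ B ∈ pre,
    ∃ x, x ∈ B ∧ x ∉ C ∧ ∃ B' ∈ pre, B' ⊆ insert x C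

lemma flatMap_split {α β : Type*} (f : α → List β) :
    ∀ (l : List α) (pre suf : List β) (c : β),
      l.flatMap f = pre ++ c :: suf →
      ∃ l1 a l2 p2 s2, l = l1 ++ a :: l2 ∧ f a = p2 ++ c :: s2 ∧
        pre = l1.flatMap f ++ p2 := by
  intro l
  induction l with
  | nil => intro pre suf c h; simp at h
  | cons a l ihl =>
    intro pre suf c h
    rw [List.flatMap_cons] at h
    rcases List.append_eq_append_iff.1 h with ⟨a', h1, h2⟩ | ⟨c', h1, h2⟩
    · obtain ⟨l1, b, l2, p2, s2, hl, hfb, hpre⟩ := ihl a' suf c h2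
      exact ⟨a :: l1, b, l2, p2, s2, by simp [hl], hfb,
        by rw [h1, hpre, List.flatMap_cons, List.append_assoc]⟩
    · cases c' with
      | nil =>
        obtain ⟨l1, b, l2, p2, s2, hl, hfb, hpre⟩ := ihl [] suf c (by simpa using h2.symm)
        refine ⟨a :: l1, b, l2, p2, s2, by simp [hl], hfb, ?_⟩
        rw [List.flatMap_cons]
        have h3 : l1.flatMap f ++ p2 = [] := hpre.symm
        rw [List.append_assoc, h3, List.append_nil, h1, List.append_nil]
      | cons c0 c'' =>
        obtain ⟨rfl, rfl⟩ : c0 = c ∧ suf = c'' ++ l.flatMap f := by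
          have := h2.symm
          rw [List.cons_append, List.cons.injEq] at this
          exact ⟨this.1, this.2.symm⟩
        exact ⟨[], a, l, pre, c'', rfl, h1, by simp⟩

lemma flatMap_congr {α β : Type*} {l : List α} {f g : α → List β}
    (h : ∀ a ∈ l, f a = g a) : l.flatMap f = l.flatMap g := by
  induction l with
  | nil => rfl
  | cons a l ih =>
    rw [List.flatMap_cons, List.flatMap_cons, h a (List.mem_cons_self),
      ih fun b hb => h b (List.mem_cons_of_mem a hb)]

lemma exists_getD_eq {l : List ℕ} {w : ℕ} (h : w ∈ l) :
    ∃ i, i < l.length ∧ l.getD i 0 = w := by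
  obtain ⟨i, hi, hget⟩ := List.mem_iff_getElem.1 h
  exact ⟨i, hi, by rw [List.getD_eq_getElem _ _ hi, hget]⟩

/-- Main induction: a rooted list is the list of monomials of a list of minimal
covers which exhausts all minimal covers and has the linear-quotient property. -/
lemma rootedList_spec {G : FinGraph} {L : List (MvPolynomial ℕ k)}
    (hL : IsRootedList k G L) :
    ∃ Cs : List (Finset ℕ), L = Cs.map (prodX k) ∧
      (∀ C, C ∈ Cs ↔ MinCover G C) ∧ LQ Cs := by
  induction hL with
  | edgeless G h =>
    refine ⟨[∅], by simp [prodX], ?_, ?_⟩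
    · intro C
      simp only [List.mem_singleton]
      constructor
      · rintro rfl
        exact ⟨fun a b hab => absurd hab (by simp [h a b]),
          fun D hD _ => Finset.subset_empty.1 hD⟩
      · intro hC
        exact (hC.2 ∅ (Finset.empty_subset _)
          (fun a b hab => absurd hab (by simp [h a b]))).symm
    · intro pre C suf hps B hB
      rcases pre with _ | ⟨p, pre⟩
      · exact absurd hB (List.not_mem_nil)
      · have hlen := congrArg List.length hps
        simp [List.length_append] at hlen
  | step G v hsimp hedge l hnd hhd hset Ls hlen hrec ih =>
    classical
    have hn0 : 0 < l.length := by
      rcases l with _ | ⟨a, l'⟩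
      · simp at hhd
      · simp
    have hl0 : l.getD 0 0 = v := by
      rcases l with _ | ⟨a, l'⟩
      · simp at hhd
      · simp only [List.head?_cons, Option.some.injEq] at hhd
        simp [hhd]
    choose Css hCss1 hCss2 hCss3 using ih
    set F : ℕ → List (Finset ℕ) := fun i => if h : i < l.length then Css i h else []
      with hF
    have hF1 : ∀ i (h : i < l.length), Ls.getD i [] = (F i).map (prodX k) := by
      intro i h; simp only [hF, dif_pos h]; exact hCss1 i h
    have hF2 : ∀ i (h : i < l.length), ∀ C, C ∈ F i ↔
        MinCover (G.del (insert (l.getD i 0) (G.nbr (l.getD i 0)))) C := by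
      intro i h; simp only [hF, dif_pos h]; exact fun C => (hCss2 i h C)
    have hF3 : ∀ i (h : i < l.length), LQ (F i) := by
      intro i h; simp only [hF, dif_pos h]; exact hCss3 i h
    have hximem : ∀ i, i < l.length → l.getD i 0 ∈ insert v (G.nbr v) := by
      intro i h
      rw [← hset]
      refine List.mem_toFinset.2 ?_
      rw [List.getD_eq_getElem _ _ h]
      exact List.getElem_mem _
    have hxiinj : ∀ i j, i < l.length → j < l.length → l.getD i 0 = l.getD j 0 →
        i = j := by
      intro i j hi hj hij
      rw [List.getD_eq_getElem _ _ hi, List.getD_eq_getElem _ _ hj] at hij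
      exact (List.Nodup.getElem_inj_iff hnd).1 hij
    refine ⟨(List.range l.length).flatMap
      (fun i => (F i).map (fun D => G.nbr (l.getD i 0) ∪ D)), ?_, ?_, ?_⟩
    · -- list equality
      rw [List.map_flatMap]
      apply flatMap_congr
      intro i hi
      have hin : i < l.length := List.mem_range.1 hi
      rw [hF1 i hin, List.map_map, List.map_map]
      apply List.map_congr_left
      intro D hD
      have hDmin := (hF2 i hin D).1 hD
      have hdisj : Disjoint (G.nbr (l.getD i 0)) D := by
        rw [Finset.disjoint_left]
        intro x hx hxD
        exact minCover_disj hDmin x hxD (Finset.mem_insert_of_mem hx)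
      show (∏ j ∈ G.nbr (l.getD i 0), X j) * prodX k D =
        prodX k (G.nbr (l.getD i 0) ∪ D)
      unfold prodX
      exact (Finset.prod_union hdisj).symm
    · -- membership
      intro C
      rw [List.mem_flatMap]
      constructor
      · rintro ⟨i, hi, hC⟩
        have hin : i < l.length := List.mem_range.1 hi
        obtain ⟨D, hD, rfl⟩ := List.mem_map.1 hC
        exact minCover_union ((hF2 i hin D).1 hD)
      · intro hC
        obtain ⟨w, hw, hwC, hnbr, hDmin, hCeq⟩ := minCover_decompose hsimp hC
        rw [← hset] at hw
        obtain ⟨i, hin, hiw⟩ := exists_getD_eq (List.mem_toFinset.1 hw)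
        refine ⟨i, List.mem_range.2 hin, List.mem_map.2 ⟨C \ G.nbr w, ?_, ?_⟩⟩
        · rw [hF2 i hin, hiw]; exact hDmin
        · rw [hiw]; exact hCeq.symm
    · -- linear quotients
      intro pre C suf hps B hB
      obtain ⟨l1, bi, l2, hl12, hfbi⟩ :
          ∃ l1 bi l2, List.range l.length = l1 ++ bi :: l2 ∧
            ∃ p2 s2, (F bi).map (fun D => G.nbr (l.getD bi 0) ∪ D) = p2 ++ C :: s2 ∧
              pre = (l1.flatMap fun i => (F i).map (fun D => G.nbr (l.getD i 0) ∪ D))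
                ++ p2 := by
        obtain ⟨l1, bi, l2, p2, s2, h1, h2, h3⟩ := flatMap_split _ _ pre suf C hps
        exact ⟨l1, bi, l2, h1, p2, s2, h2, h3⟩
      obtain ⟨p2, s2, hfbi, hpre⟩ := hfbi
      have hbin : bi < l.length := by
        have : bi ∈ List.range l.length := by rw [hl12]; simp
        exact List.mem_range.1 this
      -- decompose the block of `C`
      obtain ⟨q2, r2, hq2r2, hq2, hr2⟩ := List.map_eq_append_iff.1 hfbi
      obtain ⟨D0, t2, hDt, hD0, ht2⟩ := List.map_eq_cons_iff.1 hr2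
      have hD0F : D0 ∈ F bi := by rw [hq2r2, hDt]; simp
      have hD0min := (hF2 bi hbin D0).1 hD0F
      rw [hpre] at hB
      rcases List.mem_append.1 hB with hB1 | hB2
      · -- earlier block
        obtain ⟨bj, hbjl1, hBj⟩ := List.mem_flatMap.1 hB1
        have hbjn : bj < l.length := by
          have : bj ∈ List.range l.length := by
            rw [hl12]; exact List.mem_append.2 (Or.inl hbjl1)
          exact List.mem_range.1 this
        obtain ⟨Dj, hDjF, hBDj⟩ := List.mem_map.1 hBj
        have hDjmin := (hF2 bj hbjn Dj).1 hDjF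
        have hne : bj ≠ bi := by
          have hndR : (List.range l.length).Nodup := List.nodup_range
          rw [hl12] at hndR
          have hdis := List.disjoint_of_nodup_append hndR
          intro hc
          exact hdis hbjl1 (hc ▸ List.mem_cons_self)
        have hxv : l.getD bi 0 ∈ insert v (G.nbr v) := hximem bi hbin
        have hxjv : l.getD bj 0 ∈ insert v (G.nbr v) := hximem bj hbjn
        have hxne : l.getD bj 0 ≠ l.getD bi 0 := fun hh =>
          hne (hxiinj bj bi hbjn hbin hh)
        have hadj : G.adj (l.getD bj 0) (l.getD bi 0) = true :=
          clique_adj hsimp hxjv hxv hxne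
        have hxB : l.getD bi 0 ∈ B := by
          rw [← hBDj]
          exact Finset.mem_union_left _ (mem_nbr.2 hadj)
        have hxC : l.getD bi 0 ∉ C := by
          rw [← hD0]
          intro hc
          rcases Finset.mem_union.1 hc with h1 | h1
          · exact not_mem_nbr_self G _ h1
          · exact minCover_disj hD0min _ h1 (Finset.mem_insert_self _ _)
        -- build the earlier cover in block 0
        have hFcov : IsCover (G.del (insert v (G.nbr v)))
            (D0 ∪ (G.nbr (l.getD bi 0) \ insert v (G.nbr v))) := by
          intro a b hab
          rw [del_adj] at hab
          obtain ⟨hGab, haNv, hbNv⟩ := hab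
          by_cases haX : a ∈ G.nbr (l.getD bi 0)
          · exact Or.inl (Finset.mem_union_right _ (Finset.mem_sdiff.2 ⟨haX, haNv⟩))
          by_cases hbX : b ∈ G.nbr (l.getD bi 0)
          · exact Or.inr (Finset.mem_union_right _ (Finset.mem_sdiff.2 ⟨hbX, hbNv⟩))
          have hax : a ≠ l.getD bi 0 := by
            rintro rfl
            exact hbX (mem_nbr.2 hGab)
          have hbx : b ≠ l.getD bi 0 := by
            rintro rfl
            exact haX (mem_nbr.2 (by rw [G.symm]; exact hGab))
          have : (G.del (insert (l.getD bi 0) (G.nbr (l.getD bi 0)))).adj a b = true := by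
            rw [del_adj]
            exact ⟨hGab, fun hc => (Finset.mem_insert.1 hc).elim hax haX,
              fun hc => (Finset.mem_insert.1 hc).elim hbx hbX⟩
          rcases hD0min.1 a b this with h1 | h1
          · exact Or.inl (Finset.mem_union_left _ h1)
          · exact Or.inr (Finset.mem_union_left _ h1)
        obtain ⟨E, hEsub, hEmin⟩ := exists_minCover_subset _ hFcov
        have hEF : E ∈ F 0 := by
          rw [hF2 0 hn0, hl0]
          exact hEmin
        obtain ⟨c0, l1', rfl⟩ : ∃ c0 l1', l1 = c0 :: l1' := by
          rcases l1 with _ | ⟨c0, l1'⟩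
          · exact absurd hbjl1 (List.not_mem_nil)
          · exact ⟨c0, l1', rfl⟩
        have hc0 : c0 = 0 := by
          obtain ⟨m, hm⟩ : ∃ m, l.length = m + 1 := ⟨l.length - 1, by omega⟩
          rw [hm, List.range_succ_eq_map] at hl12
          have := hl12
          rw [List.cons_append] at this
          exact (List.cons_eq_cons.1 this.symm).1
        subst hc0
        have hB'pre : (G.nbr (l.getD 0 0) ∪ E) ∈ pre := by
          rw [hpre]
          apply List.mem_append.2
          left
          rw [List.flatMap_cons]
          apply List.mem_append.2
          left
          exact List.mem_map.2 ⟨E, hEF, rfl⟩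
        refine ⟨l.getD bi 0, hxB, hxC, G.nbr (l.getD 0 0) ∪ E, hB'pre, ?_⟩
        rw [hl0]
        intro y hy
        rcases Finset.mem_union.1 hy with h1 | h1
        · by_cases hyx : y = l.getD bi 0
          · subst hyx; exact Finset.mem_insert_self _ _
          · have hyv : y ∈ insert v (G.nbr v) := Finset.mem_insert_of_mem h1
            have : G.adj (l.getD bi 0) y = true := by
              rw [G.symm]; exact clique_adj hsimp hyv hxv hyx
            apply Finset.mem_insert_of_mem
            rw [← hD0]
            exact Finset.mem_union_left _ (mem_nbr.2 this)
        · have := hEsub h1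
          rcases Finset.mem_union.1 this with h2 | h2
          · apply Finset.mem_insert_of_mem
            rw [← hD0]
            exact Finset.mem_union_right _ h2
          · apply Finset.mem_insert_of_mem
            rw [← hD0]
            exact Finset.mem_union_left _ (Finset.mem_sdiff.1 h2).1
      · -- same block, earlier position
        obtain ⟨DB, hDBq2, hBDB⟩ := List.mem_map.1 (hq2 ▸ hB2)
        have hDBF : DB ∈ F bi := by rw [hq2r2]; exact List.mem_append.2 (Or.inl hDBq2)
        have hDBmin := (hF2 bi hbin DB).1 hDBF
        have hsplit2 : F bi = q2 ++ D0 :: t2 := by rw [hq2r2, hDt]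
        obtain ⟨x, hxDB, hxD0, DB', hDB', hsub⟩ := hF3 bi hbin q2 D0 t2 hsplit2 DB hDBq2
        refine ⟨x, ?_, ?_, G.nbr (l.getD bi 0) ∪ DB', ?_, ?_⟩
        · rw [← hBDB]; exact Finset.mem_union_right _ hxDB
        · rw [← hD0]
          intro hc
          rcases Finset.mem_union.1 hc with h1 | h1
          · exact minCover_disj hDBmin x hxDB (Finset.mem_insert_of_mem h1)
          · exact hxD0 h1
        · rw [hpre]
          apply List.mem_append.2
          right
          rw [← hq2]
          exact List.mem_map.2 ⟨DB', hDB', rfl⟩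
        · intro y hy
          rcases Finset.mem_union.1 hy with h1 | h1
          · apply Finset.mem_insert_of_mem
            rw [← hD0]
            exact Finset.mem_union_left _ h1
          · rcases Finset.mem_insert.1 (hsub h1) with h2 | h2
            · subst h2; exact Finset.mem_insert_self _ _
            · apply Finset.mem_insert_of_mem
              rw [← hD0]
              exact Finset.mem_union_right _ h2

/-! ### The colon computation -/

lemma take_set_eq (Cs : List (Finset ℕ)) (i : ℕ) :
    {x | x ∈ (Cs.map (prodX k)).take i} =
      (fun s => monomial s (1 : k)) '' (ind '' {B | B ∈ Cs.take i}) := by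
  ext u
  simp only [Set.mem_setOf_eq, Set.mem_image, ← List.map_take, List.mem_map]
  constructor
  · rintro ⟨B, hB, rfl⟩
    exact ⟨ind B, ⟨B, hB, rfl⟩, (prodX_eq B).symm⟩
  · rintro ⟨d, ⟨B, hB, rfl⟩, rfl⟩
    exact ⟨B, hB, (prodX_eq B)⟩

lemma colon_genByVars {Cs : List (Finset ℕ)} (hlq : LQ Cs) {i : ℕ}
    (hi : i < Cs.length) :
    genByVars (Submodule.colon (Ideal.span {x | x ∈ (Cs.map (prodX k)).take i})
      (Ideal.span {(Cs.map (prodX k)).getD i 1})) := by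
  classical
  have hilen : i < (Cs.map (prodX k)).length := by simpa using hi
  have hgetD : (Cs.map (prodX k)).getD i 1 = prodX k Cs[i] := by
    rw [List.getD_eq_getElem _ _ hilen, List.getElem_map]
  have hsplit : Cs = Cs.take i ++ Cs[i] :: Cs.drop (i + 1) := by
    conv_lhs => rw [← List.take_append_drop i Cs]
    rw [List.drop_eq_getElem_cons hi]
  refine ⟨{y | ∃ B ∈ Cs.take i, B ⊆ insert y Cs[i]}, ?_⟩
  have himg : ((fun j => (X j : MvPolynomial ℕ k)) ''
      {y | ∃ B ∈ Cs.take i, B ⊆ insert y Cs[i]}) =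
      (MvPolynomial.X '' {y | ∃ B ∈ Cs.take i, B ⊆ insert y Cs[i]}) := rfl
  apply le_antisymm
  · intro p hp
    rw [hgetD] at hp
    have hpu : p * monomial (ind Cs[i]) (1 : k) ∈
        Ideal.span {x | x ∈ (Cs.map (prodX k)).take i} := by
      have := Ideal.mem_colon_span_singleton.1 hp
      rwa [prodX_eq] at this
    rw [take_set_eq, mem_ideal_span_monomial_image] at hpu
    rw [himg, mem_ideal_span_X_image]
    intro m hm
    have hms : m + ind Cs[i] ∈ (p * monomial (ind Cs[i]) (1 : k)).support := by
      rw [MvPolynomial.mem_support_iff, MvPolynomial.coeff_mul_monomial]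
      simpa using MvPolynomial.mem_support_iff.1 hm
    obtain ⟨d, hd, hled⟩ := hpu _ hms
    obtain ⟨B, hB, rfl⟩ := hd
    obtain ⟨x, hxB, hxC, B', hB', hsub⟩ :=
      hlq (Cs.take i) Cs[i] (Cs.drop (i + 1)) hsplit B hB
    refine ⟨x, ⟨B', hB', hsub⟩, ?_⟩
    have h1 : ind B x ≤ m x + ind Cs[i] x := by
      have := Finsupp.le_def.1 hled x
      rwa [Finsupp.add_apply] at this
    rw [ind_apply_of_mem hxB, ind_apply_of_not_mem hxC] at h1
    omega
  · rw [Ideal.span_le]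
    rintro _ ⟨y, ⟨B, hB, hsub⟩, rfl⟩
    rw [SetLike.mem_coe, hgetD]
    apply Ideal.mem_colon_span_singleton.2
    have heq : (X y : MvPolynomial ℕ k) * prodX k Cs[i] =
        monomial (Finsupp.single y 1 + ind Cs[i]) 1 := by
      rw [prodX_eq, show (X y : MvPolynomial ℕ k) = monomial (Finsupp.single y 1) 1
        from rfl, monomial_mul, one_mul]
    rw [heq, take_set_eq, mem_ideal_span_monomial_image]
    intro m hm
    have hmeq : m = Finsupp.single y 1 + ind Cs[i] := by
      have := hm
      rw [MvPolynomial.support_monomial] at this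
      simpa using this
    refine ⟨ind B, ⟨B, hB, rfl⟩, ?_⟩
    rw [hmeq]
    intro z
    rw [Finsupp.add_apply, ind_apply]
    by_cases hzB : z ∈ B
    · rw [if_pos hzB]
      rcases Finset.mem_insert.1 (hsub hzB) with h1 | h1
      · subst h1
        rw [Finsupp.single_eq_same]
        omega
      · rw [ind_apply_of_mem h1]
        omega
    · rw [if_neg hzB]
      omega

end CRL

/-- Let `G` be a chordal graph with a rooted list
`R(G) = u_1, …, u_q`.  Then (1) the terms of the rooted list are exactly the minimal
monomial generators of the cover ideal `J(G)`, and (2) `J(G)` has linear quotients with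
respect to this order: every successive colon ideal `(u_1, …, u_{i-1}) : (u_i)` is
generated by a subset of the variables. -/
theorem chordal_rootedList_eq_minGens_and_linearQuotients (k : Type*) [Field k]
    (G : FinGraph) (hG : G.Chordal)
    (L : List (MvPolynomial ℕ k)) (hL : IsRootedList k G L) :
    {u | u ∈ L} = minGens (coverIdeal k G) ∧
    ∀ i, 0 < i → i < L.length →
      genByVars (Submodule.colon (Ideal.span {x | x ∈ L.take i})
        (Ideal.span {L.getD i 1})) := by
  obtain ⟨Cs, hLeq, hmem, hlq⟩ := CRL.rootedList_spec hL
  subst hLeq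
  constructor
  · rw [CRL.minGens_coverIdeal]
    ext u
    simp only [Set.mem_setOf_eq, List.mem_map, Set.mem_image]
    constructor
    · rintro ⟨C, hC, rfl⟩; exact ⟨C, (hmem C).1 hC, rfl⟩
    · rintro ⟨C, hC, rfl⟩; exact ⟨C, (hmem C).2 hC, rfl⟩
  · intro i h0 hiL
    exact CRL.colon_genByVars hlq (by simpa using hiL)
end

section
/- Let G be a finite simple chordal graph on vertex set {x_1,…,x_n} such that F(J(G)^s) = G(J(G)^s), i.e., every s-fold product of minimal generators of J(G) is a minimal generator of J(G)^s. Let R(G) = u_1,…,u_q be a rooted list of G and let R(J(G)^s) = Y_1,…,Y_p be the minimal generators of J(G)^s listed in decreasing rooted order. Suppose Y_r = u_{j_1}⋯u_{j_s} is the maximal expression for some 2 ≤ r ≤ p with j_1 ≤ ⋯ ≤ j_s. Then for each 1 ≤ t ≤ s with j_t ≥ 2, the colon ideal (u_1, u_2,…,u_{j_t−1}) : (u_{j_t}) is contained in the colon ideal (Y_1,…,Y_{r−1}) : (Y_r). -/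
open MvPolynomial

/-! ### Auxiliary lemmas -/

section Aux

variable {k : Type*} [Field k]

/-- A vertex cover of `G`. -/
def FinGraph.Covers (G : FinGraph) (C : Finset ℕ) : Prop :=
  ∀ a b, G.adj a b = true → a ∈ C ∨ b ∈ C

/-- A minimal vertex cover of `G`. -/
def FinGraph.MinCover (G : FinGraph) (C : Finset ℕ) : Prop :=
  G.Covers C ∧ ∀ C' ⊆ C, G.Covers C' → C' = C

theorem lexGt_trans {a b c : ℕ → ℕ} (h1 : lexGt a b) (h2 : lexGt b c) : lexGt a c := by
  obtain ⟨t1, h1a, h1b⟩ := h1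
  obtain ⟨t2, h2a, h2b⟩ := h2
  refine ⟨min t1 t2, fun j hj => ?_, ?_⟩
  · rw [h1a j (lt_of_lt_of_le hj (min_le_left _ _)),
      h2a j (lt_of_lt_of_le hj (min_le_right _ _))]
  · rcases lt_trichotomy t1 t2 with h | h | h
    · rw [min_eq_left h.le]
      have h3 := h2a t1 h
      omega
    · subst h
      rw [min_self]
      omega
    · rw [min_eq_right h.le]
      have h3 := h1a t2 h
      omega

theorem lexGt_asymm {a b : ℕ → ℕ} (h1 : lexGt a b) (h2 : lexGt b a) : False := by
  obtain ⟨t, h, hlt⟩ := lexGt_trans h1 h2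
  exact lt_irrefl _ hlt

theorem isMaxExpr_unique {L : List (MvPolynomial ℕ k)} {s : ℕ} {a b : ℕ → ℕ}
    {M : MvPolynomial ℕ k} (ha : IsMaxExpr L s a M) (hb : IsMaxExpr L s b M) : a = b := by
  by_contra hne
  exact lexGt_asymm (ha.2 b hb.1 (fun h => hne h.symm)) (hb.2 a ha.1 hne)

theorem list_prod_range {M : Type*} [CommMonoid M] (f : ℕ → M) (n : ℕ) :
    ((List.range n).map f).prod = ∏ i ∈ Finset.range n, f i := by
  induction n with
  | zero => simp
  | succ n ih =>
      rw [List.range_succ, List.map_append, List.prod_append, Finset.prod_range_succ, ih]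
      simp

theorem list_sum_range (f : ℕ → ℕ) (n : ℕ) :
    ((List.range n).map f).sum = ∑ i ∈ Finset.range n, f i := by
  induction n with
  | zero => simp
  | succ n ih =>
      rw [List.range_succ, List.map_append, List.sum_append, Finset.sum_range_succ, ih]
      simp

theorem prod_X_eq (C : Finset ℕ) :
    (∏ v ∈ C, X v : MvPolynomial ℕ k) = monomial (∑ v ∈ C, Finsupp.single v 1) 1 := by
  classical
  induction C using Finset.induction with
  | empty => simp
  | insert _ _ h ih =>
      rw [Finset.prod_insert h, ih, Finset.sum_insert h, ← pow_one (X _),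
        X_pow_eq_monomial, monomial_mul, one_mul]

theorem sum_single_apply (C : Finset ℕ) (w : ℕ) :
    (∑ v ∈ C, Finsupp.single v (1 : ℕ)) w = if w ∈ C then 1 else 0 := by
  classical
  rw [Finset.sum_apply']
  simp [Finsupp.single_apply]

theorem monomial_mem_span_pair {e : ℕ →₀ ℕ} {i j : ℕ}
    (h : (monomial e 1 : MvPolynomial ℕ k) ∈ Ideal.span {(X i : MvPolynomial ℕ k), X j}) :
    e i ≠ 0 ∨ e j ≠ 0 := by
  by_contra hc
  push_neg at hc
  obtain ⟨hi, hj⟩ := hc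
  obtain ⟨u, v, huv⟩ := Ideal.mem_span_pair.mp h
  set φ : MvPolynomial ℕ k →ₐ[k] MvPolynomial ℕ k :=
    aeval (fun n : ℕ => if n = i ∨ n = j then (0 : MvPolynomial ℕ k) else X n) with hφ
  have h1 : φ (u * X i + v * X j) = 0 := by
    simp [hφ, aeval_X]
  have h2 : φ (monomial e 1) = monomial e 1 := by
    rw [hφ, aeval_monomial, map_one, one_mul]
    have : (e.prod fun n m => (if n = i ∨ n = j then (0 : MvPolynomial ℕ k) else X n) ^ m)
        = e.prod fun n m => (X n : MvPolynomial ℕ k) ^ m := by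
      apply Finsupp.prod_congr
      intro n hn
      have hni : n ≠ i := fun hh => (Finsupp.mem_support_iff.mp hn) (hh ▸ hi)
      have hnj : n ≠ j := fun hh => (Finsupp.mem_support_iff.mp hn) (hh ▸ hj)
      rw [if_neg (by tauto)]
    rw [this, monomial_eq, C_1, one_mul]
  have h3 : (monomial e (1 : k) : MvPolynomial ℕ k) = 0 := by
    calc (monomial e (1 : k) : MvPolynomial ℕ k) = φ (monomial e 1) := h2.symm
      _ = φ (u * X i + v * X j) := by rw [huv]
      _ = 0 := h1
  exact one_ne_zero (monomial_eq_zero.mp h3)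

theorem monomial_mem_coverIdeal {G : FinGraph} {e : ℕ →₀ ℕ}
    (h : (monomial e 1 : MvPolynomial ℕ k) ∈ coverIdeal k G) :
    ∀ a b, G.adj a b = true → e a ≠ 0 ∨ e b ≠ 0 := by
  intro a b hab
  simp only [coverIdeal, Submodule.mem_iInf] at h
  exact monomial_mem_span_pair (h a b hab)

theorem covers_prod_mem {G : FinGraph} {C : Finset ℕ} (h : G.Covers C) :
    (∏ v ∈ C, X v : MvPolynomial ℕ k) ∈ coverIdeal k G := by
  classical
  simp only [coverIdeal, Submodule.mem_iInf]
  intro a b hab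
  rcases h a b hab with hc | hc
  · rw [← Finset.mul_prod_erase C _ hc]
    exact Ideal.mul_mem_right _ _ (Ideal.subset_span (by simp))
  · rw [← Finset.mul_prod_erase C _ hc]
    exact Ideal.mul_mem_right _ _ (Ideal.subset_span (by simp))

theorem minCover_mem_minGens {G : FinGraph} {C : Finset ℕ} (h : G.MinCover C) :
    (∏ v ∈ C, X v : MvPolynomial ℕ k) ∈ minGens (coverIdeal k G) := by
  classical
  refine ⟨⟨_, prod_X_eq C⟩, covers_prod_mem h.1, ?_⟩
  rintro m' ⟨e, rfl⟩ hm' hdvd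
  set d : ℕ →₀ ℕ := ∑ v ∈ C, Finsupp.single v 1 with hd
  rw [prod_X_eq C, ← hd] at hdvd ⊢
  have hed : e ≤ d := by
    rcases (monomial_dvd_monomial.mp hdvd).1 with h0 | hle
    · exact absurd h0 one_ne_zero
    · exact hle
  have hcov : G.Covers e.support := by
    intro a b hab
    have := monomial_mem_coverIdeal hm' a b hab
    simpa [Finsupp.mem_support_iff] using this
  have hsub : e.support ⊆ C := by
    intro w hw
    have h1 : e w ≤ d w := hed w
    have h2 : e w ≠ 0 := Finsupp.mem_support_iff.mp hw
    by_contra hwc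
    rw [hd, sum_single_apply, if_neg hwc] at h1
    omega
  have hsupp : e.support = C := h.2 e.support hsub hcov
  have : e = d := by
    ext w
    have h1 : e w ≤ d w := hed w
    rw [hd, sum_single_apply]
    by_cases hw : w ∈ C
    · have : e w ≠ 0 := Finsupp.mem_support_iff.mp (hsupp ▸ hw)
      rw [hd, sum_single_apply, if_pos hw] at h1
      rw [if_pos hw]; omega
    · rw [if_neg hw]
      have : w ∉ e.support := hsupp ▸ hw
      simpa [Finsupp.mem_support_iff] using this
  rw [this]

theorem rootedList_minCover {G : FinGraph} {L : List (MvPolynomial ℕ k)}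
    (hL : IsRootedList k G L) :
    ∀ u ∈ L, ∃ C : Finset ℕ, C ⊆ G.verts ∧ G.MinCover C ∧ u = ∏ v ∈ C, X v := by
  classical
  induction hL with
  | edgeless G h =>
      intro u hu
      simp only [List.mem_singleton] at hu
      refine ⟨∅, Finset.empty_subset _, ⟨?_, ?_⟩, by simp [hu]⟩
      · intro a b hab; rw [h a b] at hab; exact absurd hab (by simp)
      · intro C' hsub _; exact Finset.subset_empty.mp hsub
  | step G v hsimp hedge l hnd hhd hsetl Ls hlen hrec ih =>
      intro u hu
      rw [List.mem_flatMap] at hu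
      obtain ⟨i, hi, hu⟩ := hu
      rw [List.mem_range] at hi
      rw [List.mem_map] at hu
      obtain ⟨w, hw, rfl⟩ := hu
      set xi := l.getD i 0 with hxi
      set A : Finset ℕ := insert xi (G.nbr xi) with hA
      obtain ⟨D, hDsub, hDmin, rfl⟩ := ih i hi w hw
      have hDverts : D ⊆ G.verts \ A := hDsub
      have hdisj : Disjoint (G.nbr xi) D := by
        rw [Finset.disjoint_right]
        intro x hxD hxN
        have := hDverts hxD
        rw [Finset.mem_sdiff] at this
        exact this.2 (by rw [hA]; exact Finset.mem_insert_of_mem hxN)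
      have hxiA : xi ∈ A := Finset.mem_insert_self _ _
      have hxiN : xi ∉ G.nbr xi := by
        intro hx
        rw [FinGraph.nbr, Finset.mem_filter] at hx
        rw [G.loopless xi] at hx
        simp at hx
      refine ⟨G.nbr xi ∪ D, ?_, ⟨?_, ?_⟩, ?_⟩
      · intro x hx
        rcases Finset.mem_union.mp hx with hx | hx
        · exact (Finset.mem_filter.mp hx).1
        · exact (Finset.mem_sdiff.mp (hDverts hx)).1
      · -- Covers
        intro a b hab
        by_cases haA : a ∈ A
        · rcases Finset.mem_insert.mp (hA ▸ haA) with rfl | haN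
          · right
            apply Finset.mem_union_left
            rw [FinGraph.nbr, Finset.mem_filter]
            exact ⟨(G.mem_of_adj _ _ hab).2, hab⟩
          · exact Or.inl (Finset.mem_union_left _ haN)
        · by_cases hbA : b ∈ A
          · rcases Finset.mem_insert.mp (hA ▸ hbA) with rfl | hbN
            · left
              apply Finset.mem_union_left
              rw [FinGraph.nbr, Finset.mem_filter]
              refine ⟨(G.mem_of_adj _ _ hab).1, ?_⟩
              rw [G.symm]; exact hab
            · exact Or.inr (Finset.mem_union_left _ hbN)
          · have hdel : (G.del A).adj a b = true := by
              simp only [FinGraph.del, hab, Bool.true_and, Bool.not_eq_true',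
                Bool.or_eq_false_iff, decide_eq_false_iff_not]
              exact ⟨haA, hbA⟩
            rcases hDmin.1 a b hdel with hc | hc
            · exact Or.inl (Finset.mem_union_right _ hc)
            · exact Or.inr (Finset.mem_union_right _ hc)
      · -- minimality
        intro C' hsub hC'
        have hxiC : xi ∉ G.nbr xi ∪ D := by
          rw [Finset.mem_union]
          rintro (hx | hx)
          · exact hxiN hx
          · exact (Finset.mem_sdiff.mp (hDverts hx)).2 hxiA
        have hnbr' : G.nbr xi ⊆ C' := by
          intro w' hw'
          have hadj : G.adj xi w' = true := (Finset.mem_filter.mp hw').2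
          rcases hC' xi w' hadj with hc | hc
          · exact absurd (hsub hc) hxiC
          · exact hc
        have hD'sub : C' \ G.nbr xi ⊆ D := by
          intro x hx
          rw [Finset.mem_sdiff] at hx
          rcases Finset.mem_union.mp (hsub hx.1) with hc | hc
          · exact absurd hc hx.2
          · exact hc
        have hD'cov : (G.del A).Covers (C' \ G.nbr xi) := by
          intro a b hab
          simp only [FinGraph.del, Bool.and_eq_true, Bool.not_eq_true',
            Bool.or_eq_false_iff, decide_eq_false_iff_not] at hab
          obtain ⟨hab', haA, hbA⟩ := hab
          have hanbr : a ∉ G.nbr xi := fun hh => haA (Finset.mem_insert_of_mem hh)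
          have hbnbr : b ∉ G.nbr xi := fun hh => hbA (Finset.mem_insert_of_mem hh)
          rcases hC' a b hab' with hc | hc
          · exact Or.inl (Finset.mem_sdiff.mpr ⟨hc, hanbr⟩)
          · exact Or.inr (Finset.mem_sdiff.mpr ⟨hc, hbnbr⟩)
        have hD'eq : C' \ G.nbr xi = D := hDmin.2 _ hD'sub hD'cov
        apply Finset.Subset.antisymm hsub
        intro x hx
        rcases Finset.mem_union.mp hx with hc | hc
        · exact hnbr' hc
        · rw [← hD'eq] at hc
          exact (Finset.mem_sdiff.mp hc).1
      · rw [Finset.prod_union hdisj]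

theorem rootedList_mem_minGens {G : FinGraph} {L : List (MvPolynomial ℕ k)}
    (hL : IsRootedList k G L) : ∀ u ∈ L, u ∈ minGens (coverIdeal k G) := by
  intro u hu
  obtain ⟨C, _, hmin, rfl⟩ := rootedList_minCover hL u hu
  exact minCover_mem_minGens hmin

theorem mul_mem_of_span {R : Type*} [CommRing R] {S : Set R} {I : Ideal R} {W x : R}
    (hx : x ∈ Ideal.span S) (h : ∀ y ∈ S, y * W ∈ I) : x * W ∈ I := by
  induction hx using Submodule.span_induction with
  | mem y hy => exact h y hy
  | zero => simpa using I.zero_mem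
  | add u v _ _ hu hv => rw [add_mul]; exact I.add_mem hu hv
  | smul c u _ hu => rw [smul_eq_mul, mul_assoc]; exact I.smul_mem c hu

end Aux

/-- Let `G` be a chordal graph with `F(J(G)^s) = G(J(G)^s)`, let
`R(G) = u_1, …, u_q` be a rooted list of `G` and let `Y_0, …, Y_{p-1}` be the minimal
generators of `J(G)^s` listed in decreasing rooted order.  Suppose `Y_r` (`r ≥ 1`) has
maximal expression with exponent vector `a`.  Then for each index `t ≥ 1` occurring in
this expression (`a t > 0`), we have
`(u_1, …, u_{t-1}) : (u_t) ⊆ (Y_0, …, Y_{r-1}) : (Y_r)`. -/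
theorem chordal_colon_of_factor_subset_colon (k : Type*) [Field k]
    (G : FinGraph) (hG : G.Chordal) (s : ℕ)
    (L : List (MvPolynomial ℕ k)) (hL : IsRootedList k G L)
    (hFG : sFold (coverIdeal k G) s = minGens ((coverIdeal k G) ^ s))
    (Ys : List (MvPolynomial ℕ k))
    (hset : {Y | Y ∈ Ys} = minGens ((coverIdeal k G) ^ s))
    (hsort : Ys.Pairwise (rootedGt L s))
    (r : ℕ) (hr1 : 1 ≤ r) (hr2 : r < Ys.length)
    (a : ℕ → ℕ) (hmax : IsMaxExpr L s a (Ys.getD r 1)) :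
    ∀ t, 1 ≤ t → 0 < a t →
      Submodule.colon (Ideal.span {x | x ∈ L.take t}) (Ideal.span {L.getD t 1}) ≤
        Submodule.colon (Ideal.span {x | x ∈ Ys.take r})
          (Ideal.span {Ys.getD r 1}) := by
  classical
  intro t ht hat f hf
  obtain ⟨⟨hzero, hsum, hprod⟩, hmaxa⟩ := hmax
  set q := L.length with hq
  have htq : t < q := by
    by_contra hc
    rw [hzero t (le_of_not_gt hc)] at hat
    exact absurd hat (lt_irrefl 0)
  set a' : ℕ → ℕ := fun i => if i = t then a t - 1 else a i with ha'
  set W : MvPolynomial ℕ k := ∏ i ∈ Finset.range q, (L.getD i 1) ^ (a' i) with hW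
  have hsplit : ∀ i, a i = a' i + (if i = t then 1 else 0) := by
    intro i
    by_cases h : i = t
    · subst h
      simp only [ha', if_pos rfl, if_true, eq_self_iff_true]
      omega
    · simp [ha', h]
  have key_prod : ∀ j < q,
      (∏ i ∈ Finset.range q, (L.getD i 1) ^ (a' i + (if i = j then 1 else 0)))
        = L.getD j 1 * W := by
    intro j hj
    simp only [pow_add]
    rw [Finset.prod_mul_distrib, mul_comm]
    congr 1
    have hstep : ∀ i ∈ Finset.range q,
        (L.getD i 1 : MvPolynomial ℕ k) ^ (if i = j then 1 else 0)
          = if i = j then L.getD i 1 else 1 := by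
      intro i _; split <;> simp
    rw [Finset.prod_congr rfl hstep, Finset.prod_ite_eq' (Finset.range q) j
      (fun i => (L.getD i 1 : MvPolynomial ℕ k)), if_pos (Finset.mem_range.mpr hj)]
  have hYW : Ys.getD r 1 = L.getD t 1 * W := by
    rw [hprod, Finset.prod_congr rfl (fun i _ => by rw [hsplit i])]
    exact key_prod t htq
  have hsum' : (∑ i ∈ Finset.range q, a' i) + 1 = s := by
    rw [← hsum, Finset.sum_congr rfl (fun i (_ : i ∈ Finset.range q) => hsplit i),
      Finset.sum_add_distrib, Finset.sum_ite_eq' (Finset.range q) t (fun _ => 1),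
      if_pos (Finset.mem_range.mpr htq)]
  have hkey : ∀ x ∈ ({x | x ∈ L.take t} : Set (MvPolynomial ℕ k)),
      x * W ∈ Ideal.span {x | x ∈ Ys.take r} := by
    intro x hx
    obtain ⟨j, hjlen, hxj⟩ := List.mem_iff_getElem.mp hx
    have hjlen' : j < min t q := by rw [← List.length_take]; exact hjlen
    have hjt : j < t := lt_of_lt_of_le hjlen' (min_le_left _ _)
    have hjq : j < q := lt_of_lt_of_le hjlen' (min_le_right _ _)
    have hxL : x = L.getD j 1 := by
      rw [← hxj, List.getElem_take, List.getD_eq_getElem L 1 hjq]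
    subst hxL
    have hjnet : j ≠ t := Nat.ne_of_lt hjt
    set b : ℕ → ℕ := fun i => if i = j then a' i + 1 else a' i with hb
    have hbj : ∀ i, b i = a' i + (if i = j then 1 else 0) := by
      intro i; simp only [hb]; split <;> omega
    have hexpr : IsExprOn L s b (L.getD j 1 * W) := by
      refine ⟨?_, ?_, ?_⟩
      · intro i hi
        have h1 : a i = 0 := hzero i hi
        have hit : i ≠ t := by omega
        have hij : i ≠ j := by omega
        simp only [hb, ha', if_neg hit, if_neg hij, h1]
      · rw [Finset.sum_congr rfl (fun i (_ : i ∈ Finset.range q) => hbj i),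
          Finset.sum_add_distrib, Finset.sum_ite_eq' (Finset.range q) j (fun _ => 1),
          if_pos (Finset.mem_range.mpr hjq)]
        exact hsum'
      · rw [Finset.prod_congr rfl (fun i (_ : i ∈ Finset.range q) => by rw [hbj i])]
        exact (key_prod j hjq).symm
    have hlexba : lexGt b a := by
      refine ⟨j, fun i hij => ?_, ?_⟩
      · have h1 : i ≠ j := Nat.ne_of_lt hij
        have h2 : i ≠ t := by omega
        simp only [hb, ha', if_neg h1, if_neg h2]
      · simp only [hb, ha', if_pos rfl, if_neg hjnet]
        omega
    have hmemF : L.getD j 1 * W ∈ sFold (coverIdeal k G) s := by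
      refine ⟨L.getD j 1 ::
        (List.range q).flatMap (fun i => List.replicate (a' i) (L.getD i 1)), ?_, ?_, ?_⟩
      · rw [List.length_cons, List.length_flatMap]
        have heq : (List.map (List.length ∘ fun i => List.replicate (a' i) (L.getD i 1))
            (List.range q)).sum = ∑ i ∈ Finset.range q, a' i := by
          rw [show (List.length ∘ fun i => List.replicate (a' i) (L.getD i 1)) = a' from
            funext fun i => List.length_replicate]
          exact list_sum_range a' q
        simp only [Function.comp_def] at heq
        rw [heq]
        omega
      · intro u hu
        rcases List.mem_cons.mp hu with rfl | hu
        · apply rootedList_mem_minGens hL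
          rw [List.getD_eq_getElem L 1 hjq]
          exact List.getElem_mem _
        · rw [List.mem_flatMap] at hu
          obtain ⟨i, hi, hu⟩ := hu
          rw [List.mem_range] at hi
          rw [List.eq_of_mem_replicate hu]
          apply rootedList_mem_minGens hL
          rw [List.getD_eq_getElem L 1 hi]
          exact List.getElem_mem _
      · rw [List.prod_cons]
        congr 1
        rw [List.flatMap, List.prod_flatten, List.map_map,
          show (List.prod ∘ fun i => List.replicate (a' i) (L.getD i 1))
            = fun i => (L.getD i 1 : MvPolynomial ℕ k) ^ (a' i) from
            funext fun i => List.prod_replicate _ _, list_prod_range]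
    have hmemY : L.getD j 1 * W ∈ Ys := by
      have hmg : L.getD j 1 * W ∈ minGens ((coverIdeal k G) ^ s) := by
        rw [← hFG]; exact hmemF
      rw [← hset] at hmg
      exact hmg
    obtain ⟨m, hm, hmval⟩ := List.mem_iff_getElem.mp hmemY
    have hmr : m < r := by
      by_contra hge
      push_neg at hge
      rcases eq_or_lt_of_le hge with heq | hlt
      · subst heq
        have hYsr : Ys.getD r 1 = L.getD j 1 * W := by
          rw [List.getD_eq_getElem Ys 1 hr2]; exact hmval
        have hbne : b ≠ a := by
          intro hcontr
          have hcf := congrFun hcontr j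
          simp only [hb, ha', if_pos rfl, if_neg hjnet] at hcf
          omega
        have hab := hmaxa b (by rw [hYsr]; exact hexpr) hbne
        exact lexGt_asymm hab hlexba
      · have hpair := List.pairwise_iff_getElem.mp hsort r m hr2 hm hlt
        obtain ⟨a2, c, ha2, hc, hlex⟩ := hpair
        rw [← List.getD_eq_getElem Ys 1 hr2] at ha2
        have ha2a : a2 = a := isMaxExpr_unique ha2 ⟨⟨hzero, hsum, hprod⟩, hmaxa⟩
        rw [hmval] at hc
        rw [ha2a] at hlex
        by_cases hbc : b = c
        · subst hbc
          exact lexGt_asymm hlex hlexba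
        · have hlcb : lexGt c b := hc.2 b hexpr hbc
          exact lexGt_asymm hlex (lexGt_trans hlcb hlexba)
    apply Ideal.subset_span
    show L.getD j 1 * W ∈ Ys.take r
    rw [← hmval]
    exact List.mem_iff_getElem.mpr ⟨m,
      by rw [List.length_take]; omega, List.getElem_take⟩
  have hfu : f * L.getD t 1 ∈ Ideal.span {x | x ∈ L.take t} := by
    have hmc := Submodule.mem_colon.mp hf (L.getD t 1) (Ideal.subset_span rfl)
    simpa [smul_eq_mul] using hmc
  rw [Submodule.mem_colon]
  intro p hp
  obtain ⟨c0, rfl⟩ := (Ideal.mem_span_singleton').mp hp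
  rw [smul_eq_mul]
  have hfY : f * Ys.getD r 1 ∈ Ideal.span {x | x ∈ Ys.take r} := by
    rw [hYW, ← mul_assoc]
    exact mul_mem_of_span hfu hkey
  have hre : f * (c0 * Ys.getD r 1) = (f * Ys.getD r 1) * c0 := by ring
  rw [hre]
  exact Ideal.mul_mem_right _ _ hfY
end

section
/- Let G be the diamond graph on vertices x_1, x_2, x_3, x_4 with edges {x_1,x_2}, {x_1,x_3}, {x_2,x_3}, {x_2,x_4}, {x_3,x_4}, and let u_1 = x_2x_3, u_2 = x_1x_3x_4, u_3 = x_1x_2x_4 (these are the minimal generators of J(G)). Then for every s ≥ 1: (1) every s-fold product u_1^{a}u_2^{b}u_3^{c} with a+b+c = s is a minimal generator of J(G)^s and has a unique such expression; and (2) listing the minimal generators of J(G)^s in decreasing lexicographic order of exponent vectors (a,b,c) gives linear quotients, i.e., each successive colon ideal is generated by a subset of the variables; explicitly, for a generator Y_r = u_1^α u_2^β u_3^γ with r ≥ 2, the colon ideal of the preceding generators equals (x_2, x_3) if β ≠ 0 and γ ≠ 0, equals (x_3) if β = 0 and γ ≠ 0, and equals (x_2) if β ≠ 0 and γ = 0.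 -/
open MvPolynomial

/-- The cover ideal of the diamond graph on vertices `x_1, x_2, x_3, x_4` with edges
`{x_1,x_2}, {x_1,x_3}, {x_2,x_3}, {x_2,x_4}, {x_3,x_4}`. -/
noncomputable def diamondCoverIdeal (k : Type*) [Field k] : Ideal (MvPolynomial ℕ k) :=
  Ideal.span {(X 1 : MvPolynomial ℕ k), X 2} ⊓ Ideal.span {(X 1 : MvPolynomial ℕ k), X 3} ⊓
    Ideal.span {(X 2 : MvPolynomial ℕ k), X 3} ⊓ Ideal.span {(X 2 : MvPolynomial ℕ k), X 4} ⊓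
    Ideal.span {(X 3 : MvPolynomial ℕ k), X 4}

/-- Lexicographic comparison of exponent triples: `(a,b,c) >_lex (α,β,γ)`. -/
def triLexGt (a b c α β γ : ℕ) : Prop :=
  α < a ∨ (a = α ∧ (β < b ∨ (b = β ∧ γ < c)))

namespace DiamondAux

open MvPolynomial

variable {k : Type*} [Field k]

/-- Exponent vector of `u1^a * u2^b * u3^c`. -/
noncomputable def E (a b c : ℕ) : ℕ →₀ ℕ :=
  Finsupp.single 1 (b + c) + Finsupp.single 2 (a + c) +
    Finsupp.single 3 (a + b) + Finsupp.single 4 (b + c)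

@[simp] lemma E_apply_1 (a b c : ℕ) : E a b c 1 = b + c := by
  simp [E, Finsupp.single_apply]

@[simp] lemma E_apply_2 (a b c : ℕ) : E a b c 2 = a + c := by
  simp [E, Finsupp.single_apply]

@[simp] lemma E_apply_3 (a b c : ℕ) : E a b c 3 = a + b := by
  simp [E, Finsupp.single_apply]

@[simp] lemma E_apply_4 (a b c : ℕ) : E a b c 4 = b + c := by
  simp [E, Finsupp.single_apply]

lemma E_le_iff {a b c : ℕ} {m : ℕ →₀ ℕ} :
    E a b c ≤ m ↔ b + c ≤ m 1 ∧ a + c ≤ m 2 ∧ a + b ≤ m 3 ∧ b + c ≤ m 4 := by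
  constructor
  · intro h
    exact ⟨by simpa using Finsupp.le_def.mp h 1, by simpa using Finsupp.le_def.mp h 2,
      by simpa using Finsupp.le_def.mp h 3, by simpa using Finsupp.le_def.mp h 4⟩
  · rintro ⟨h1, h2, h3, h4⟩
    rw [Finsupp.le_def]
    intro i
    by_cases hi1 : i = 1; · subst hi1; simpa using h1
    by_cases hi2 : i = 2; · subst hi2; simpa using h2
    by_cases hi3 : i = 3; · subst hi3; simpa using h3
    by_cases hi4 : i = 4; · subst hi4; simpa using h4
    simp [E, Finsupp.single_apply, Ne.symm hi1, Ne.symm hi2, Ne.symm hi3, Ne.symm hi4]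

lemma prod_eq (a b c : ℕ) :
    ((X 2 : MvPolynomial ℕ k) * X 3) ^ a * (X 1 * X 3 * X 4) ^ b * (X 1 * X 2 * X 4) ^ c
      = monomial (E a b c) 1 := by
  have hX : ∀ i : ℕ, (X i : MvPolynomial ℕ k) = monomial (Finsupp.single i 1) 1 := fun i => rfl
  simp only [hX, monomial_mul, monomial_pow, one_mul, mul_one, one_pow]
  refine congrArg (fun d => monomial d (1 : k)) ?_
  ext i
  simp only [E, Finsupp.add_apply, Finsupp.smul_apply, Finsupp.single_apply, smul_eq_mul,
    mul_ite, mul_one, mul_zero]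
  split_ifs <;> omega

lemma mono_mul (d e : ℕ →₀ ℕ) :
    (monomial d (1 : k)) * monomial e 1 = monomial (d + e) 1 := by
  rw [monomial_mul, mul_one]

/-- Exponent vectors of `s`-fold products. -/
def T (s : ℕ) : Set (ℕ →₀ ℕ) := {d | ∃ a b c : ℕ, a + b + c = s ∧ d = E a b c}

lemma span3_eq :
    Ideal.span {((X 2 : MvPolynomial ℕ k) * X 3), X 1 * X 3 * X 4, X 1 * X 2 * X 4}
      = Ideal.span ((fun d => monomial d (1 : k)) '' {E 1 0 0, E 0 1 0, E 0 0 1}) := by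
  have h1 : ((X 2 : MvPolynomial ℕ k) * X 3) = monomial (E 1 0 0) 1 := by
    simpa using prod_eq (k := k) 1 0 0
  have h2 : ((X 1 : MvPolynomial ℕ k) * X 3 * X 4) = monomial (E 0 1 0) 1 := by
    simpa using prod_eq (k := k) 0 1 0
  have h3 : ((X 1 : MvPolynomial ℕ k) * X 2 * X 4) = monomial (E 0 0 1) 1 := by
    simpa using prod_eq (k := k) 0 0 1
  rw [h1, h2, h3, Set.image_insert_eq, Set.image_insert_eq, Set.image_singleton]

lemma span3_pow (s : ℕ) :
    (Ideal.span {((X 2 : MvPolynomial ℕ k) * X 3), X 1 * X 3 * X 4, X 1 * X 2 * X 4}) ^ s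
      = Ideal.span ((fun d => monomial d (1 : k)) '' T s) := by
  induction s with
  | zero =>
    rw [pow_zero, Ideal.one_eq_top]
    symm
    rw [Ideal.eq_top_iff_one]
    have h0 : (0 : ℕ →₀ ℕ) ∈ T 0 := ⟨0, 0, 0, rfl, by ext i; simp [E]⟩
    have := Ideal.subset_span (Set.mem_image_of_mem (fun d => monomial d (1 : k)) h0)
    simpa using this
  | succ n ih =>
    rw [pow_succ, ih, span3_eq, Ideal.span_mul_span']
    congr 1
    ext f
    constructor
    · intro hf
      rcases Set.mem_mul.mp hf with ⟨x, hx, y, hy, rfl⟩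
      rcases hx with ⟨d, ⟨a, b, c, hsum, rfl⟩, rfl⟩
      obtain ⟨e, he, rfl⟩ := hy
      simp only [Set.mem_insert_iff, Set.mem_singleton_iff] at he
      rw [mono_mul]
      rcases he with rfl | rfl | rfl <;> refine Set.mem_image_of_mem _ ?_
      · refine ⟨a + 1, b, c, by omega, ?_⟩
        ext i
        simp only [E, Finsupp.add_apply, Finsupp.single_apply]
        split_ifs <;> omega
      · refine ⟨a, b + 1, c, by omega, ?_⟩
        ext i
        simp only [E, Finsupp.add_apply, Finsupp.single_apply]
        split_ifs <;> omega
      · refine ⟨a, b, c + 1, by omega, ?_⟩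
        ext i
        simp only [E, Finsupp.add_apply, Finsupp.single_apply]
        split_ifs <;> omega
    · rintro ⟨d, ⟨a, b, c, hsum, rfl⟩, rfl⟩
      rcases Nat.eq_zero_or_pos a with ha | ha
      · rcases Nat.eq_zero_or_pos b with hb | hb
        · -- c > 0
          refine Set.mem_mul.mpr ⟨monomial (E a b (c - 1)) 1,
            Set.mem_image_of_mem _ ⟨a, b, c - 1, by omega, rfl⟩,
            monomial (E 0 0 1) 1, Set.mem_image_of_mem _ (by simp), ?_⟩
          rw [mono_mul]
          refine congrArg (fun d => monomial d (1 : k)) ?_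
          ext i
          simp only [E, Finsupp.add_apply, Finsupp.single_apply]
          split_ifs <;> omega
        · refine Set.mem_mul.mpr ⟨monomial (E a (b - 1) c) 1,
            Set.mem_image_of_mem _ ⟨a, b - 1, c, by omega, rfl⟩,
            monomial (E 0 1 0) 1, Set.mem_image_of_mem _ (by simp), ?_⟩
          rw [mono_mul]
          refine congrArg (fun d => monomial d (1 : k)) ?_
          ext i
          simp only [E, Finsupp.add_apply, Finsupp.single_apply]
          split_ifs <;> omega
      · refine Set.mem_mul.mpr ⟨monomial (E (a - 1) b c) 1,
          Set.mem_image_of_mem _ ⟨a - 1, b, c, by omega, rfl⟩,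
          monomial (E 1 0 0) 1, Set.mem_image_of_mem _ (by simp), ?_⟩
        rw [mono_mul]
        refine congrArg (fun d => monomial d (1 : k)) ?_
        ext i
        simp only [E, Finsupp.add_apply, Finsupp.single_apply]
        split_ifs <;> omega

lemma mem_span_pair_iff {i j : ℕ} {f : MvPolynomial ℕ k} :
    f ∈ Ideal.span {(X i : MvPolynomial ℕ k), X j} ↔
      ∀ m ∈ f.support, 1 ≤ m i ∨ 1 ≤ m j := by
  have hset : ({(X i : MvPolynomial ℕ k), X j} : Set _) =
      (fun d => monomial d (1 : k)) '' {Finsupp.single i 1, Finsupp.single j 1} := by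
    rw [Set.image_insert_eq, Set.image_singleton]
    rfl
  rw [hset, mem_ideal_span_monomial_image]
  simp [Finsupp.single_le_iff]

lemma mem_span_single_iff {i : ℕ} {f : MvPolynomial ℕ k} :
    f ∈ Ideal.span {(X i : MvPolynomial ℕ k)} ↔ ∀ m ∈ f.support, 1 ≤ m i := by
  have hset : ({(X i : MvPolynomial ℕ k)} : Set _) =
      (fun d => monomial d (1 : k)) '' {Finsupp.single i 1} := by
    rw [Set.image_singleton]
    rfl
  rw [hset, mem_ideal_span_monomial_image]
  simp [Finsupp.single_le_iff]

lemma mem_span3_pow_iff {f : MvPolynomial ℕ k} {s : ℕ} :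
    f ∈ (Ideal.span {((X 2 : MvPolynomial ℕ k) * X 3), X 1 * X 3 * X 4, X 1 * X 2 * X 4}) ^ s ↔
      ∀ m ∈ f.support, ∃ a b c : ℕ, a + b + c = s ∧ E a b c ≤ m := by
  rw [span3_pow, mem_ideal_span_monomial_image]
  constructor
  · intro h m hm
    obtain ⟨d, ⟨a, b, c, hsum, rfl⟩, hle⟩ := h m hm
    exact ⟨a, b, c, hsum, hle⟩
  · intro h m hm
    obtain ⟨a, b, c, hsum, hle⟩ := h m hm
    exact ⟨E a b c, ⟨a, b, c, hsum, rfl⟩, hle⟩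

lemma diamond_le_span3 :
    diamondCoverIdeal k ≤
      Ideal.span {((X 2 : MvPolynomial ℕ k) * X 3), X 1 * X 3 * X 4, X 1 * X 2 * X 4} := by
  intro f hf
  simp only [diamondCoverIdeal, Ideal.mem_inf] at hf
  obtain ⟨⟨⟨⟨h12, h13⟩, h23⟩, h24⟩, h34⟩ := hf
  rw [span3_eq, mem_ideal_span_monomial_image]
  intro m hm
  have p12 := mem_span_pair_iff.mp h12 m hm
  have p13 := mem_span_pair_iff.mp h13 m hm
  have p23 := mem_span_pair_iff.mp h23 m hm
  have p24 := mem_span_pair_iff.mp h24 m hm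
  have p34 := mem_span_pair_iff.mp h34 m hm
  by_cases h2 : 1 ≤ m 2 <;> by_cases h3 : 1 ≤ m 3
  · exact ⟨E 1 0 0, by simp, E_le_iff.mpr ⟨by omega, by omega, by omega, by omega⟩⟩
  · exact ⟨E 0 0 1, by simp, E_le_iff.mpr ⟨by omega, by omega, by omega, by omega⟩⟩
  · exact ⟨E 0 1 0, by simp, E_le_iff.mpr ⟨by omega, by omega, by omega, by omega⟩⟩
  · exact ⟨E 1 0 0, by simp, E_le_iff.mpr ⟨by omega, by omega, by omega, by omega⟩⟩

lemma u1_mem : (X 2 : MvPolynomial ℕ k) * X 3 ∈ diamondCoverIdeal k := by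
  simp only [diamondCoverIdeal, Ideal.mem_inf]
  refine ⟨⟨⟨⟨?_, ?_⟩, ?_⟩, ?_⟩, ?_⟩
  · exact Ideal.mul_mem_right _ _ (Ideal.subset_span (by simp))
  · exact Ideal.mul_mem_left _ _ (Ideal.subset_span (by simp))
  · exact Ideal.mul_mem_right _ _ (Ideal.subset_span (by simp))
  · exact Ideal.mul_mem_right _ _ (Ideal.subset_span (by simp))
  · exact Ideal.mul_mem_left _ _ (Ideal.subset_span (by simp))

lemma u2_mem : (X 1 : MvPolynomial ℕ k) * X 3 * X 4 ∈ diamondCoverIdeal k := by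
  simp only [diamondCoverIdeal, Ideal.mem_inf]
  refine ⟨⟨⟨⟨?_, ?_⟩, ?_⟩, ?_⟩, ?_⟩
  · exact Ideal.mul_mem_right _ _ (Ideal.mul_mem_right _ _ (Ideal.subset_span (by simp)))
  · exact Ideal.mul_mem_right _ _ (Ideal.mul_mem_right _ _ (Ideal.subset_span (by simp)))
  · exact Ideal.mul_mem_right _ _ (Ideal.mul_mem_left _ _ (Ideal.subset_span (by simp)))
  · exact Ideal.mul_mem_left _ _ (Ideal.subset_span (by simp))
  · exact Ideal.mul_mem_left _ _ (Ideal.subset_span (by simp))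

lemma u3_mem : (X 1 : MvPolynomial ℕ k) * X 2 * X 4 ∈ diamondCoverIdeal k := by
  simp only [diamondCoverIdeal, Ideal.mem_inf]
  refine ⟨⟨⟨⟨?_, ?_⟩, ?_⟩, ?_⟩, ?_⟩
  · exact Ideal.mul_mem_right _ _ (Ideal.mul_mem_right _ _ (Ideal.subset_span (by simp)))
  · exact Ideal.mul_mem_right _ _ (Ideal.mul_mem_right _ _ (Ideal.subset_span (by simp)))
  · exact Ideal.mul_mem_right _ _ (Ideal.mul_mem_left _ _ (Ideal.subset_span (by simp)))
  · exact Ideal.mul_mem_left _ _ (Ideal.subset_span (by simp))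
  · exact Ideal.mul_mem_left _ _ (Ideal.subset_span (by simp))

lemma prod_mem_pow (a b c : ℕ) :
    ((X 2 : MvPolynomial ℕ k) * X 3) ^ a * (X 1 * X 3 * X 4) ^ b * (X 1 * X 2 * X 4) ^ c ∈
      (diamondCoverIdeal k) ^ (a + b + c) := by
  have h := Ideal.mul_mem_mul
    (Ideal.mul_mem_mul (Ideal.pow_mem_pow (u1_mem (k := k)) a)
      (Ideal.pow_mem_pow (u2_mem (k := k)) b))
    (Ideal.pow_mem_pow (u3_mem (k := k)) c)
  rwa [← pow_add, ← pow_add] at h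

/-- Exponent vectors of `s`-fold products lex-greater than `(α, β, γ)`. -/
def Tgt (s α β γ : ℕ) : Set (ℕ →₀ ℕ) :=
  {d | ∃ a b c : ℕ, a + b + c = s ∧ triLexGt a b c α β γ ∧ d = E a b c}

lemma lexSet_eq (s α β γ : ℕ) :
    {m : MvPolynomial ℕ k | ∃ a b c : ℕ, a + b + c = s ∧ triLexGt a b c α β γ ∧
        m = ((X 2 : MvPolynomial ℕ k) * X 3) ^ a * (X 1 * X 3 * X 4) ^ b *
          (X 1 * X 2 * X 4) ^ c} =
      (fun d => monomial d (1 : k)) '' Tgt s α β γ := by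
  ext m
  constructor
  · rintro ⟨a, b, c, h1, h2, rfl⟩
    exact ⟨E a b c, ⟨a, b, c, h1, h2, rfl⟩, (prod_eq a b c).symm⟩
  · rintro ⟨d, ⟨a, b, c, h1, h2, rfl⟩, rfl⟩
    exact ⟨a, b, c, h1, h2, (prod_eq a b c).symm⟩

lemma key {a b c α β γ : ℕ} {m : ℕ →₀ ℕ} (hs : a + b + c = α + β + γ)
    (hlex : triLexGt a b c α β γ) (hle : E a b c ≤ m + E α β γ) :
    (1 ≤ m 2 ∨ 1 ≤ m 3) ∧ (β = 0 → 1 ≤ m 3) ∧ (γ = 0 → 1 ≤ m 2) := by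
  obtain ⟨-, h2, h3, -⟩ := E_le_iff.mp hle
  rw [Finsupp.add_apply, E_apply_2] at h2
  rw [Finsupp.add_apply, E_apply_3] at h3
  unfold triLexGt at hlex
  omega

lemma colon_support (s α β γ : ℕ) (f : MvPolynomial ℕ k)
    (hf : f * monomial (E α β γ) 1 ∈
      Ideal.span ((fun d => monomial d (1 : k)) '' Tgt s α β γ))
    (hs : α + β + γ = s) :
    ∀ m ∈ f.support, (1 ≤ m 2 ∨ 1 ≤ m 3) ∧ (β = 0 → 1 ≤ m 3) ∧ (γ = 0 → 1 ≤ m 2) := by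
  intro m hm
  rw [mem_ideal_span_monomial_image] at hf
  have hsup : m + E α β γ ∈ (f * monomial (E α β γ) 1).support := by
    rw [mem_support_iff, coeff_mul_monomial, mul_one]
    exact mem_support_iff.mp hm
  obtain ⟨d, ⟨a, b, c, h1, h2, rfl⟩, hled⟩ := hf _ hsup
  exact key (by omega) h2 hled

lemma gen_mem {s α β γ : ℕ} (a b c : ℕ) (hsum : a + b + c = s)
    (hlex : triLexGt a b c α β γ) :
    monomial (E a b c) (1 : k) ∈
      Ideal.span ((fun d => monomial d (1 : k)) '' Tgt s α β γ) :=
  Ideal.subset_span ⟨E a b c, ⟨a, b, c, hsum, hlex, rfl⟩, rfl⟩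

end DiamondAux


/-- For the diamond graph `G` with `u_1 = x_2x_3`, `u_2 = x_1x_3x_4`,
`u_3 = x_1x_2x_4` the minimal generators of `J(G)`, and any `s ≥ 1`:
(1) every `s`-fold product `u_1^a u_2^b u_3^c` (`a+b+c = s`) is a minimal generator of
`J(G)^s`, and its expression is unique; and (2) listing the minimal generators of
`J(G)^s` in decreasing lexicographic order of exponent vectors gives linear quotients,
with the successive colon ideal of `Y_r = u_1^α u_2^β u_3^γ` (`r ≥ 2`) being
`(x_2, x_3)` if `β ≠ 0 ∧ γ ≠ 0`, `(x_3)` if `β = 0 ∧ γ ≠ 0`, and `(x_2)` if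
`β ≠ 0 ∧ γ = 0`. -/
theorem diamond_powers_linear_quotients (k : Type*) [Field k] (s : ℕ) (hs : 1 ≤ s) :
    (∀ a b c : ℕ, a + b + c = s →
      ((X 2 : MvPolynomial ℕ k) * X 3) ^ a * (X 1 * X 3 * X 4) ^ b * (X 1 * X 2 * X 4) ^ c ∈
        minGens ((diamondCoverIdeal k) ^ s)) ∧
    (∀ a b c a' b' c' : ℕ, a + b + c = s → a' + b' + c' = s →
      ((X 2 : MvPolynomial ℕ k) * X 3) ^ a * (X 1 * X 3 * X 4) ^ b * (X 1 * X 2 * X 4) ^ c =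
        ((X 2 : MvPolynomial ℕ k) * X 3) ^ a' * (X 1 * X 3 * X 4) ^ b' * (X 1 * X 2 * X 4) ^ c' →
      a = a' ∧ b = b' ∧ c = c') ∧
    (∀ α β γ : ℕ, α + β + γ = s →
      ((0 < β ∧ 0 < γ) →
        Submodule.colon
          (Ideal.span {m : MvPolynomial ℕ k | ∃ a b c : ℕ, a + b + c = s ∧
            triLexGt a b c α β γ ∧
            m = ((X 2 : MvPolynomial ℕ k) * X 3) ^ a * (X 1 * X 3 * X 4) ^ b *
              (X 1 * X 2 * X 4) ^ c})
          (Ideal.span {((X 2 : MvPolynomial ℕ k) * X 3) ^ α * (X 1 * X 3 * X 4) ^ β *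
            (X 1 * X 2 * X 4) ^ γ}) =
        Ideal.span {(X 2 : MvPolynomial ℕ k), X 3}) ∧
      ((β = 0 ∧ 0 < γ) →
        Submodule.colon
          (Ideal.span {m : MvPolynomial ℕ k | ∃ a b c : ℕ, a + b + c = s ∧
            triLexGt a b c α β γ ∧
            m = ((X 2 : MvPolynomial ℕ k) * X 3) ^ a * (X 1 * X 3 * X 4) ^ b *
              (X 1 * X 2 * X 4) ^ c})
          (Ideal.span {((X 2 : MvPolynomial ℕ k) * X 3) ^ α * (X 1 * X 3 * X 4) ^ β *
            (X 1 * X 2 * X 4) ^ γ}) =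
        Ideal.span {(X 3 : MvPolynomial ℕ k)}) ∧
      ((0 < β ∧ γ = 0) →
        Submodule.colon
          (Ideal.span {m : MvPolynomial ℕ k | ∃ a b c : ℕ, a + b + c = s ∧
            triLexGt a b c α β γ ∧
            m = ((X 2 : MvPolynomial ℕ k) * X 3) ^ a * (X 1 * X 3 * X 4) ^ b *
              (X 1 * X 2 * X 4) ^ c})
          (Ideal.span {((X 2 : MvPolynomial ℕ k) * X 3) ^ α * (X 1 * X 3 * X 4) ^ β *
            (X 1 * X 2 * X 4) ^ γ}) =
        Ideal.span {(X 2 : MvPolynomial ℕ k)})) := by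
  classical
  refine ⟨?_, ?_, ?_⟩
  · -- Part 1: minimal generators
    intro a b c hsum
    refine ⟨⟨DiamondAux.E a b c, DiamondAux.prod_eq a b c⟩, ?_, ?_⟩
    · have := DiamondAux.prod_mem_pow (k := k) a b c
      rwa [hsum] at this
    · rintro m' ⟨d, rfl⟩ hmem hdvd
      rw [DiamondAux.prod_eq] at hdvd
      have hdle : d ≤ DiamondAux.E a b c := by
        rcases (monomial_dvd_monomial.mp hdvd).1 with h | h
        · exact absurd h one_ne_zero
        · exact h
      have hpow : (monomial d (1 : k)) ∈
          (Ideal.span {((X 2 : MvPolynomial ℕ k) * X 3), X 1 * X 3 * X 4,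
            X 1 * X 2 * X 4}) ^ s :=
        Ideal.pow_right_mono DiamondAux.diamond_le_span3 s hmem
      rw [DiamondAux.mem_span3_pow_iff] at hpow
      obtain ⟨a', b', c', hsum', hle'⟩ := hpow d (mem_support_iff.mpr (by simp))
      obtain ⟨l1, l2, l3, l4⟩ := DiamondAux.E_le_iff.mp hle'
      have m1 : d 1 ≤ b + c := by simpa using Finsupp.le_def.mp hdle 1
      have m2 : d 2 ≤ a + c := by simpa using Finsupp.le_def.mp hdle 2
      have m3 : d 3 ≤ a + b := by simpa using Finsupp.le_def.mp hdle 3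
      have m4 : d 4 ≤ b + c := by simpa using Finsupp.le_def.mp hdle 4
      have heq : d = DiamondAux.E a b c :=
        le_antisymm hdle (DiamondAux.E_le_iff.mpr ⟨by omega, by omega, by omega, by omega⟩)
      rw [DiamondAux.prod_eq, heq]
  · -- Part 2: uniqueness of expressions
    intro a b c a' b' c' h h' heq
    rw [DiamondAux.prod_eq, DiamondAux.prod_eq] at heq
    rcases (monomial_eq_monomial_iff _ _ _ _).mp heq with ⟨hE, -⟩ | ⟨h10, -⟩
    · have e1 := congrArg (fun d : ℕ →₀ ℕ => d 1) hE
      have e2 := congrArg (fun d : ℕ →₀ ℕ => d 2) hE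
      have e3 := congrArg (fun d : ℕ →₀ ℕ => d 3) hE
      simp only [DiamondAux.E_apply_1, DiamondAux.E_apply_2, DiamondAux.E_apply_3] at e1 e2 e3
      exact ⟨by omega, by omega, by omega⟩
    · exact absurd h10 one_ne_zero
  · -- Part 3: linear quotients
    intro α β γ hs
    have hexch2 : 1 ≤ β → (X 2 : MvPolynomial ℕ k) * monomial (DiamondAux.E α β γ) 1 =
        monomial (Finsupp.single 1 1 + Finsupp.single 4 1) 1 *
          monomial (DiamondAux.E (α + 1) (β - 1) γ) 1 := by
      intro hβ
      rw [show (X 2 : MvPolynomial ℕ k) = monomial (Finsupp.single 2 1) 1 from rfl,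
        DiamondAux.mono_mul, DiamondAux.mono_mul]
      refine congrArg (fun d => monomial d (1 : k)) ?_
      ext i
      simp only [DiamondAux.E, Finsupp.add_apply, Finsupp.single_apply]
      split_ifs <;> omega
    have hexch3 : 1 ≤ γ → (X 3 : MvPolynomial ℕ k) * monomial (DiamondAux.E α β γ) 1 =
        monomial (Finsupp.single 1 1 + Finsupp.single 4 1) 1 *
          monomial (DiamondAux.E (α + 1) β (γ - 1)) 1 := by
      intro hγ
      rw [show (X 3 : MvPolynomial ℕ k) = monomial (Finsupp.single 3 1) 1 from rfl,
        DiamondAux.mono_mul, DiamondAux.mono_mul]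
      refine congrArg (fun d => monomial d (1 : k)) ?_
      ext i
      simp only [DiamondAux.E, Finsupp.add_apply, Finsupp.single_apply]
      split_ifs <;> omega
    refine ⟨?_, ?_, ?_⟩
    · rintro ⟨hβ, hγ⟩
      apply le_antisymm
      · intro f hf
        rw [Ideal.mem_colon_span_singleton, DiamondAux.prod_eq, DiamondAux.lexSet_eq] at hf
        have h := DiamondAux.colon_support s α β γ f hf hs
        rw [DiamondAux.mem_span_pair_iff]
        intro m hm
        exact (h m hm).1
      · rw [Ideal.span_le]
        rintro x hx
        simp only [Set.mem_insert_iff, Set.mem_singleton_iff] at hx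
        rw [SetLike.mem_coe, Ideal.mem_colon_span_singleton, DiamondAux.prod_eq,
          DiamondAux.lexSet_eq]
        rcases hx with rfl | rfl
        · rw [hexch2 hβ]
          exact Ideal.mul_mem_left _ _
            (DiamondAux.gen_mem (α + 1) (β - 1) γ (by omega) (Or.inl (by omega)))
        · rw [hexch3 hγ]
          exact Ideal.mul_mem_left _ _
            (DiamondAux.gen_mem (α + 1) β (γ - 1) (by omega) (Or.inl (by omega)))
    · rintro ⟨hβ, hγ⟩
      apply le_antisymm
      · intro f hf
        rw [Ideal.mem_colon_span_singleton, DiamondAux.prod_eq, DiamondAux.lexSet_eq] at hf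
        have h := DiamondAux.colon_support s α β γ f hf hs
        rw [DiamondAux.mem_span_single_iff]
        intro m hm
        exact (h m hm).2.1 hβ
      · rw [Ideal.span_le]
        rintro x hx
        simp only [Set.mem_singleton_iff] at hx
        subst hx
        rw [SetLike.mem_coe, Ideal.mem_colon_span_singleton, DiamondAux.prod_eq,
          DiamondAux.lexSet_eq, hexch3 hγ]
        exact Ideal.mul_mem_left _ _
          (DiamondAux.gen_mem (α + 1) β (γ - 1) (by omega) (Or.inl (by omega)))
    · rintro ⟨hβ, hγ⟩
      apply le_antisymm
      · intro f hf
        rw [Ideal.mem_colon_span_singleton, DiamondAux.prod_eq, DiamondAux.lexSet_eq] at hf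
        have h := DiamondAux.colon_support s α β γ f hf hs
        rw [DiamondAux.mem_span_single_iff]
        intro m hm
        exact (h m hm).2.2 hγ
      · rw [Ideal.span_le]
        rintro x hx
        simp only [Set.mem_singleton_iff] at hx
        subst hx
        rw [SetLike.mem_coe, Ideal.mem_colon_span_singleton, DiamondAux.prod_eq,
          DiamondAux.lexSet_eq, hexch2 hβ]
        exact Ideal.mul_mem_left _ _
          (DiamondAux.gen_mem (α + 1) (β - 1) γ (by omega) (Or.inl (by omega)))
end
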